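/- arXiv:2102.04079 — 6 statements merged into one kernel-verified Lean document; each statement's English description precedes it below -/
import Mathlib

section
/- Let N ≥ 1, p > 1, 0 < γ < min{2, N} and 0 < T < ∞. Then there exists a constant C₁ > 0, depending only on N, p and γ, with the following property: if μ is a nonnegative Radon measure on ℝ^N and u is a solution of the Hardy parabolic equation ∂_t u − Δu = |x|^{-γ} u^p with initial data μ on ℝ^N × [0,T), then for every z ∈ ℝ^N and every σ with 0 < σ < T^{1/2}, one has (⨍_{B(z,σ)} |x|^{γ/(p−1)} dx)^{-1} μ(B(z,σ)) ≤ C₁ σ^{N − 2/(p−1)}. -/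
open MeasureTheory Real
open scoped ENNReal NNReal
open Metric

/-- The Gaussian heat kernel on `ℝ^N`. -/
noncomputable def G (N : ℕ) (x : EuclideanSpace ℝ (Fin N)) (t : ℝ) : ℝ :=
  (4 * Real.pi * t) ^ (-(N : ℝ) / 2) * Real.exp (-‖x‖ ^ 2 / (4 * t))

/-- The right-hand side of the Duhamel formulation of the Hardy parabolic equation
`∂_t u - Δu = |x|^{-γ} u^p` with a nonnegative Radon measure `μ` as initial data. -/
noncomputable def hardyRHS (N : ℕ) (p γ : ℝ) (μ : Measure (EuclideanSpace ℝ (Fin N)))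
    (u : EuclideanSpace ℝ (Fin N) → ℝ → ℝ) (x : EuclideanSpace ℝ (Fin N)) (t : ℝ) : ℝ≥0∞ :=
  (∫⁻ y, ENNReal.ofReal (G N (x - y) t) ∂μ) +
    ∫⁻ s in Set.Ioo (0 : ℝ) t,
      ∫⁻ y, ENNReal.ofReal (G N (x - y) (t - s) * ‖y‖ ^ (-γ) * u y s ^ p)

/-- `u` is a solution of the Hardy parabolic equation `∂_t u - Δu = |x|^{-γ} u^p`
with initial data the nonnegative Radon measure `μ` on `ℝ^N × [0,T)`. -/
def IsSolution (N : ℕ) (p γ : ℝ) (μ : Measure (EuclideanSpace ℝ (Fin N))) (T : ℝ)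
    (u : EuclideanSpace ℝ (Fin N) → ℝ → ℝ) : Prop :=
  Measurable (Function.uncurry u) ∧ (∀ x t, 0 ≤ u x t) ∧
    ∀ᵐ x ∂(volume : Measure (EuclideanSpace ℝ (Fin N))), ∀ t : ℝ, 0 < t → t < T →
      hardyRHS N p γ μ u x t ≠ ⊤ ∧ ENNReal.ofReal (u x t) = hardyRHS N p γ μ u x t

lemma G_lower (N : ℕ) (w : EuclideanSpace ℝ (Fin N)) {r t : ℝ} (ht : 0 < t) (htr : t ≤ r)
    (hw : ‖w‖ ^ 2 ≤ 16 * t) :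
    (4 * Real.pi) ^ (-(N : ℝ) / 2) * Real.exp (-4) * r ^ (-(N : ℝ) / 2) ≤ G N w t := by
  have hπ : (0:ℝ) < 4 * Real.pi := by positivity
  have h1 : (4 * Real.pi) ^ (-(N : ℝ) / 2) * r ^ (-(N : ℝ) / 2) ≤ (4 * Real.pi * t) ^ (-(N : ℝ) / 2) := by
    rw [← Real.mul_rpow hπ.le (le_trans ht.le htr)]
    exact Real.rpow_le_rpow_of_nonpos (by positivity) (by nlinarith)
      (by rw [neg_div]; exact neg_nonpos.2 (by positivity))
  have h2 : Real.exp (-4) ≤ Real.exp (-‖w‖ ^ 2 / (4 * t)) := by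
    apply Real.exp_le_exp.2
    rw [neg_div, neg_le_neg_iff, div_le_iff₀ (by positivity)]
    linarith
  calc (4 * Real.pi) ^ (-(N : ℝ) / 2) * Real.exp (-4) * r ^ (-(N : ℝ) / 2)
      = ((4 * Real.pi) ^ (-(N : ℝ) / 2) * r ^ (-(N : ℝ) / 2)) * Real.exp (-4) := by ring
    _ ≤ (4 * Real.pi * t) ^ (-(N : ℝ) / 2) * Real.exp (-‖w‖ ^ 2 / (4 * t)) := by
        apply mul_le_mul h1 h2 (Real.exp_pos _).le (by positivity)
    _ = G N w t := rfl

lemma ball_in_inter {N : ℕ} (z x : EuclideanSpace ℝ (Fin N)) {σ ρ : ℝ}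
    (hx : x ∈ ball z σ) (hρ0 : 0 < ρ) (hρσ : ρ ≤ σ) :
    ∃ c, ball c (ρ / 2) ⊆ ball x ρ ∩ ball z σ := by
  have hσ : 0 < σ := hρ0.trans_le hρσ
  by_cases hxz : x = z
  · refine ⟨z, Set.subset_inter ?_ (ball_subset_ball (by linarith))⟩
    rw [hxz]; exact ball_subset_ball (by linarith)
  · set d := ‖x - z‖ with hd
    have hd0 : 0 < d := by
      simpa [hd, sub_eq_zero] using norm_pos_iff.2 (sub_ne_zero.2 hxz)
    have hdσ : d < σ := by simpa [hd, ← dist_eq_norm] using mem_ball.1 hx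
    set s : ℝ := ρ / (2 * d) with hs
    have hs0 : 0 < s := by positivity
    refine ⟨x - s • (x - z), Set.subset_inter ?_ ?_⟩
    · apply ball_subset_ball'
      have : dist (x - s • (x - z)) x = ρ / 2 := by
        rw [dist_eq_norm]
        simp only [sub_sub_cancel_left, norm_neg, norm_smul, Real.norm_eq_abs,
          abs_of_pos hs0]
        rw [hs, ← hd, div_mul_eq_mul_div, mul_div_mul_right _ _ hd0.ne']
      rw [this]; linarith
    · apply ball_subset_ball'
      have hcz : dist (x - s • (x - z)) z = |1 - s| * d := by
        rw [dist_eq_norm]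
        have : x - s • (x - z) - z = (1 - s) • (x - z) := by
          rw [sub_smul, one_smul]; abel
        rw [this, norm_smul, Real.norm_eq_abs]
      rw [hcz]
      have hsd : s * d = ρ / 2 := by rw [hs, div_mul_eq_mul_div, mul_div_mul_right _ _ hd0.ne']
      rcases le_total s 1 with h1 | h1
      · rw [abs_of_nonneg (by linarith)]
        nlinarith
      · rw [abs_of_nonpos (by linarith)]
        nlinarith

lemma recursion_bound {p c C : ℝ} (hp : 1 < p) (hc : 0 < c) (m : ℕ → ℝ)
    (hm0 : 0 ≤ m 0)
    (hrec : ∀ k, m (k + 1) = c * 2 ^ (-(k : ℝ)) * m k ^ p)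
    (hbdd : ∀ k, m k ≤ C) :
    m 0 ≤ 2 ^ ((1 / (p - 1)) ^ 2) * c ^ (-(1 / (p - 1))) := by
  have hp1 : (0:ℝ) < p - 1 := by linarith
  have hc2 : (0:ℝ) < 2 := two_pos
  set a : ℝ := 1 / (p - 1) with ha
  set b : ℝ := (1 / (p - 1)) ^ 2 with hb
  have ha0 : 0 < a := by positivity
  have hmn : ∀ k, 0 ≤ m k := by
    intro k
    induction k with
    | zero => exact hm0
    | succ k ih => rw [hrec k]; positivity
  set n : ℕ → ℝ := fun k => c ^ a * 2 ^ (-(a * k + b)) * m k with hn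
  have hnn : ∀ k, 0 ≤ n k := fun k =>
    mul_nonneg (by positivity) (hmn k)
  have hstep : ∀ k, n (k + 1) = n k ^ p := by
    intro k
    have hcast : ((k + 1 : ℕ) : ℝ) = (k : ℝ) + 1 := by push_cast; ring
    simp only [hn, hrec k, hcast]
    rw [Real.mul_rpow (mul_nonneg (by positivity) (by positivity)) (hmn k),
      Real.mul_rpow (by positivity) (by positivity),
      ← Real.rpow_mul hc.le, ← Real.rpow_mul hc2.le]
    have e2 : a * p = a + 1 := by
      have : a * (p - 1) = 1 := by rw [ha]; exact one_div_mul_cancel hp1.ne'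
      linear_combination this
    have e3 : -(a * (k : ℝ) + b) * p = -(a * ((k : ℝ) + 1) + b) + -(k : ℝ) := by
      have hb' : b = a ^ 2 := by rw [hb, ha]
      linear_combination (-(k:ℝ) - a) * e2 - (p - 1) * hb'
    rw [e2, e3, Real.rpow_add hc, Real.rpow_one, Real.rpow_add hc2]
    ring
  have hpow : ∀ k, n k = n 0 ^ (p ^ k) := by
    intro k
    induction k with
    | zero => simp
    | succ k ih =>
      rw [hstep k, ih, ← Real.rpow_mul (hnn 0), ← pow_succ]
  have h01 : n 0 ≤ 1 := by
    by_contra h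
    push_neg at h
    have hn0 : (0:ℝ) < n 0 := lt_trans one_pos h
    set r : ℝ := n 0 ^ (p - 1) with hr
    have hr1 : 1 < r := (Real.one_lt_rpow_iff_of_pos hn0).2 (Or.inl ⟨h, hp1⟩)
    have hup : ∀ k : ℕ, n 0 * r ^ k ≤ n k := by
      intro k
      rw [hpow k]
      have h1 : (1 : ℝ) + k * (p - 1) ≤ p ^ k := by
        have := one_add_mul_le_pow (a := p - 1) (by linarith) k
        calc (1:ℝ) + k * (p-1) ≤ (1 + (p-1))^k := this
          _ = p ^ k := by ring_nf
      have h2 : n 0 ^ ((k:ℝ) * (p-1)) = r ^ k := by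
        rw [mul_comm, Real.rpow_mul hn0.le, Real.rpow_natCast]
      calc n 0 * r ^ k = n 0 ^ ((1:ℝ) + (k : ℝ) * (p - 1)) := by
            rw [Real.rpow_add hn0, Real.rpow_one, h2]
        _ ≤ n 0 ^ (p ^ k) := by
            apply Real.rpow_le_rpow_of_exponent_le h.le
            exact_mod_cast h1
    have hb2 : ∀ k, n k ≤ c ^ a * C := by
      intro k
      simp only [hn]
      have h2le : (2:ℝ) ^ (-(a * k + b)) ≤ 1 :=
        Real.rpow_le_one_of_one_le_of_nonpos (by norm_num) (neg_nonpos.2 (by positivity))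
      have : 2 ^ (-(a * (k:ℝ) + b)) * m k ≤ C :=
        le_trans (mul_le_of_le_one_left (hmn k) h2le) (hbdd k)
      calc c ^ a * 2 ^ (-(a * (k:ℝ) + b)) * m k
          = c ^ a * (2 ^ (-(a * (k:ℝ) + b)) * m k) := by ring
        _ ≤ c ^ a * C := mul_le_mul_of_nonneg_left this (by positivity)
    obtain ⟨k, hk⟩ := pow_unbounded_of_one_lt (c ^ a * C) hr1
    nlinarith [hup k, hb2 k, pow_pos (lt_trans one_pos hr1) k]
  have h0' : c ^ a * 2 ^ (-b) * m 0 ≤ 1 := by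
    simp only [hn, Nat.cast_zero, mul_zero, zero_add] at h01
    exact h01
  have key : (2:ℝ) ^ b * c ^ (-a) * (c ^ a * 2 ^ (-b)) = 1 := by
    have k1 : (2:ℝ) ^ b * 2 ^ (-b) = 1 := by rw [← Real.rpow_add hc2]; simp
    have k2 : c ^ (-a) * c ^ a = 1 := by rw [← Real.rpow_add hc]; simp
    calc (2:ℝ) ^ b * c ^ (-a) * (c ^ a * 2 ^ (-b))
        = ((2:ℝ) ^ b * 2 ^ (-b)) * (c ^ (-a) * c ^ a) := by ring
      _ = 1 := by rw [k1, k2]; norm_num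
  calc m 0 = 2 ^ b * c ^ (-a) * (c ^ a * 2 ^ (-b) * m 0) := by
        rw [show 2 ^ b * c ^ (-a) * (c ^ a * 2 ^ (-b) * m 0)
            = (2 ^ b * c ^ (-a) * (c ^ a * 2 ^ (-b))) * m 0 by ring, key, one_mul]
    _ ≤ 2 ^ b * c ^ (-a) * 1 := mul_le_mul_of_nonneg_left h0' (by positivity)
    _ = 2 ^ b * c ^ (-a) := by ring

lemma avg_norm_rpow_lower {N : ℕ} (hN : 1 ≤ N) {q : ℝ} (hq : 0 ≤ q)
    (z : EuclideanSpace ℝ (Fin N)) {σ : ℝ} (hσ : 0 < σ) :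
    (max ‖z‖ σ) ^ q ≤ 2 * 4 ^ q * ⨍ x in ball z σ, ‖x‖ ^ q := by
  haveI : NeZero N := ⟨by omega⟩
  set B := ball z σ with hB
  have hBfin : volume B < ⊤ := measure_ball_lt_top
  have hBpos : 0 < volume B := measure_ball_pos _ _ hσ
  have hBtR : 0 < (volume B).toReal := ENNReal.toReal_pos hBpos.ne' hBfin.ne
  have hcont : Continuous (fun x : EuclideanSpace ℝ (Fin N) => ‖x‖ ^ q) :=
    continuous_norm.rpow_const (fun _ => Or.inr hq)
  have hint : IntegrableOn (fun x : EuclideanSpace ℝ (Fin N) => ‖x‖ ^ q) B volume :=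
    (hcont.continuousOn.integrableOn_compact (isCompact_closedBall z σ)).mono_set
      ball_subset_closedBall
  have havg : ⨍ x in B, ‖x‖ ^ q = (volume B).toReal⁻¹ * ∫ x in B, ‖x‖ ^ q :=
    setAverage_eq _ _ _
  have h2q : (1:ℝ) ≤ 2 ^ q := Real.one_le_rpow (by norm_num) hq
  have h4q : (4:ℝ) ^ q = 2 ^ q * 2 ^ q := by
    rw [show (4:ℝ) = 2 * 2 by norm_num, Real.mul_rpow (by norm_num) (by norm_num)]
  rcases le_or_gt (2 * σ) ‖z‖ with hcase | hcase
  · -- far from origin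
    have hRa : max ‖z‖ σ = ‖z‖ := max_eq_left (by linarith)
    have hlow : ∀ x ∈ B, (‖z‖ / 2) ^ q ≤ ‖x‖ ^ q := by
      intro x hx
      apply Real.rpow_le_rpow (by positivity) _ hq
      have : ‖z - x‖ < σ := by
        rw [← dist_eq_norm, dist_comm]; exact mem_ball.1 hx
      have h1 : ‖z‖ ≤ ‖x‖ + ‖z - x‖ := by
        simpa using norm_add_le x (z - x)
      linarith
    have hI : (volume B).toReal * ((‖z‖ / 2) ^ q) ≤ ∫ x in B, ‖x‖ ^ q := by
      have := setIntegral_mono_on (integrableOn_const hBfin.ne) hint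
        measurableSet_ball hlow
      simpa [setIntegral_const, Measure.real] using this
    have havglow : (‖z‖ / 2) ^ q ≤ ⨍ x in B, ‖x‖ ^ q := by
      rw [havg]
      rw [inv_mul_eq_div, le_div_iff₀ hBtR]
      linarith [hI]
    have hsplit : (‖z‖ / 2) ^ q = ‖z‖ ^ q / 2 ^ q :=
      Real.div_rpow (norm_nonneg z) (by norm_num : (0:ℝ) ≤ 2) q
    have hzq : (0:ℝ) ≤ ‖z‖ ^ q := Real.rpow_nonneg (norm_nonneg _) q
    have h2pos : (0:ℝ) < 2 ^ q := by positivity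
    rw [hRa]
    have key : ‖z‖ ^ q ≤ 2 ^ q * ⨍ x in B, ‖x‖ ^ q := by
      rw [hsplit] at havglow
      calc ‖z‖ ^ q = 2 ^ q * (‖z‖ ^ q / 2 ^ q) := by field_simp
        _ ≤ 2 ^ q * ⨍ x in B, ‖x‖ ^ q := by
            exact mul_le_mul_of_nonneg_left havglow h2pos.le
    have havgnn : (0:ℝ) ≤ ⨍ x in B, ‖x‖ ^ q := le_trans (by positivity) havglow
    calc ‖z‖ ^ q ≤ 2 ^ q * ⨍ x in B, ‖x‖ ^ q := key
      _ ≤ 2 * 4 ^ q * ⨍ x in B, ‖x‖ ^ q := by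
          apply mul_le_mul_of_nonneg_right _ havgnn
          nlinarith
  · -- near the origin
    have hRb : max ‖z‖ σ ≤ 2 * σ := max_le hcase.le (by linarith)
    set S := ball (0 : EuclideanSpace ℝ (Fin N)) (σ / 2) with hS
    have hSfin : volume S < ⊤ := measure_ball_lt_top
    -- volume computations
    have hballvol : ∀ (c : EuclideanSpace ℝ (Fin N)) (r : ℝ), 0 ≤ r →
        (volume (ball c r)).toReal
          = r ^ N * (volume (ball (0:EuclideanSpace ℝ (Fin N)) 1)).toReal := by
      intro c r hr
      rw [Measure.addHaar_ball volume c hr, ENNReal.toReal_mul, ENNReal.toReal_ofReal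
        (by positivity), finrank_euclideanSpace_fin]
    have hω : 0 < (volume (ball (0:EuclideanSpace ℝ (Fin N)) 1)).toReal :=
      ENNReal.toReal_pos (measure_ball_pos _ _ one_pos).ne' measure_ball_lt_top.ne
    have hvolS : (volume S).toReal = (σ/2) ^ N * (volume (ball (0:EuclideanSpace ℝ (Fin N)) 1)).toReal :=
      hballvol 0 (σ/2) (by positivity)
    have hvolB : (volume B).toReal = σ ^ N * (volume (ball (0:EuclideanSpace ℝ (Fin N)) 1)).toReal :=
      hballvol z σ hσ.le
    have hhalf : (σ/2) ^ N ≤ σ ^ N / 2 := by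
      rw [div_pow]
      apply div_le_div_of_nonneg_left (by positivity) (by norm_num)
      calc (2:ℝ) = 2^1 := (pow_one 2).symm
        _ ≤ 2^N := pow_le_pow_right₀ (by norm_num) hN
    have hsub : volume B ≤ volume (B \ S) + volume S := by
      calc volume B ≤ volume ((B \ S) ∪ S) := measure_mono (by
        intro x hx; by_cases h : x ∈ S
        · exact Set.mem_union_right _ h
        · exact Set.mem_union_left _ ⟨hx, h⟩)
        _ ≤ volume (B \ S) + volume S := measure_union_le _ _
    have hdfin : volume (B \ S) < ⊤ := lt_of_le_of_lt (measure_mono Set.diff_subset) hBfin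
    have hsubR : (volume B).toReal ≤ (volume (B \ S)).toReal + (volume S).toReal := by
      have := ENNReal.toReal_mono (a := volume B)
        (by simp [ENNReal.add_ne_top, hdfin.ne, hSfin.ne]) hsub
      rwa [ENNReal.toReal_add hdfin.ne hSfin.ne] at this
    have hdhalf : (volume B).toReal / 2 ≤ (volume (B \ S)).toReal := by
      rw [hvolB]
      rw [hvolS] at hsubR
      rw [hvolB] at hsubR
      nlinarith [hω]
    have hlow : ∀ x ∈ B \ S, (σ / 2) ^ q ≤ ‖x‖ ^ q := by
      intro x hx
      apply Real.rpow_le_rpow (by positivity) _ hq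
      have := hx.2
      simp only [hS, mem_ball, dist_zero_right, not_lt] at this
      exact this
    have hintd : IntegrableOn (fun x : EuclideanSpace ℝ (Fin N) => ‖x‖ ^ q) (B \ S) volume :=
      hint.mono_set Set.diff_subset
    have hI : (volume (B \ S)).toReal * ((σ / 2) ^ q) ≤ ∫ x in B \ S, ‖x‖ ^ q := by
      have := setIntegral_mono_on (integrableOn_const hdfin.ne) hintd
        (measurableSet_ball.diff measurableSet_ball) hlow
      simpa [setIntegral_const, Measure.real] using this
    have hI2 : ∫ x in B \ S, ‖x‖ ^ q ≤ ∫ x in B, ‖x‖ ^ q := by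
      apply setIntegral_mono_set hint
      · filter_upwards with x using Real.rpow_nonneg (norm_nonneg _) q
      · exact HasSubset.Subset.eventuallyLE Set.diff_subset
    have havglow : (σ / 2) ^ q / 2 ≤ ⨍ x in B, ‖x‖ ^ q := by
      rw [havg, inv_mul_eq_div, le_div_iff₀ hBtR]
      have hqnn : (0:ℝ) ≤ (σ/2) ^ q := by positivity
      calc (σ / 2) ^ q / 2 * (volume B).toReal
          = (volume B).toReal / 2 * ((σ/2) ^ q) := by ring
        _ ≤ (volume (B \ S)).toReal * ((σ/2) ^ q) :=
            mul_le_mul_of_nonneg_right hdhalf hqnn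
        _ ≤ ∫ x in B \ S, ‖x‖ ^ q := hI
        _ ≤ ∫ x in B, ‖x‖ ^ q := hI2
    have hRq : (max ‖z‖ σ) ^ q ≤ 4 ^ q * (σ/2) ^ q := by
      rw [← Real.mul_rpow (by norm_num) (by positivity)]
      apply Real.rpow_le_rpow (le_trans hσ.le (le_max_right ‖z‖ σ)) _ hq
      calc max ‖z‖ σ ≤ 2 * σ := hRb
        _ = 4 * (σ/2) := by ring
    have havgnn : (0:ℝ) ≤ ⨍ x in B, ‖x‖ ^ q := le_trans (by positivity) havglow
    calc (max ‖z‖ σ) ^ q ≤ 4 ^ q * (σ/2) ^ q := hRq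
      _ ≤ 4 ^ q * (2 * ⨍ x in B, ‖x‖ ^ q) := by
          apply mul_le_mul_of_nonneg_left _ (by positivity)
          linarith
      _ = 2 * 4 ^ q * ⨍ x in B, ‖x‖ ^ q := by ring

set_option maxHeartbeats 1600000 in
/-- Theorem 1.1, inequality (1.5), case θ = 2.
If `u` solves the Hardy parabolic equation with initial data `μ` on `ℝ^N × [0,T)`, then
`(⨍_{B(z,σ)} |x|^{γ/(p-1)} dx)⁻¹ μ(B(z,σ)) ≤ C₁ σ^{N - 2/(p-1)}` for `0 < σ < √T`. -/
theorem statement0 (N : ℕ) (hN : 1 ≤ N) (p γ : ℝ) (hp : 1 < p)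
    (hγ0 : 0 < γ) (hγ2 : γ < 2) (hγN : γ < N) :
    ∃ C₁ : ℝ, 0 < C₁ ∧
      ∀ T : ℝ, 0 < T →
      ∀ μ : Measure (EuclideanSpace ℝ (Fin N)), IsLocallyFiniteMeasure μ →
      ∀ u : EuclideanSpace ℝ (Fin N) → ℝ → ℝ, IsSolution N p γ μ T u →
      ∀ (z : EuclideanSpace ℝ (Fin N)) (σ : ℝ), 0 < σ → σ < Real.sqrt T →
        ENNReal.ofReal ((⨍ x in Metric.ball z σ, ‖x‖ ^ (γ / (p - 1)))⁻¹) *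
            μ (Metric.ball z σ)
          ≤ ENNReal.ofReal (C₁ * σ ^ ((N : ℝ) - 2 / (p - 1))) := by
  haveI : NeZero N := ⟨by omega⟩
  have hp1 : (0:ℝ) < p - 1 := by linarith
  -- constants
  set κ : ℝ := (4 * Real.pi) ^ (-(N : ℝ) / 2) * Real.exp (-4) with hκdef
  have hκ : 0 < κ := by positivity
  set ω : ℝ := (volume (ball (0 : EuclideanSpace ℝ (Fin N)) 1)).toReal with hωdef
  have hω : 0 < ω :=
    ENNReal.toReal_pos (measure_ball_pos _ _ one_pos).ne' measure_ball_lt_top.ne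
  set K : ℝ := κ * ω * 2 ^ (-γ) / (4 * 2 ^ N) with hKdef
  have hK : 0 < K := by positivity
  set q : ℝ := γ / (p - 1) with hqdef
  have hq : 0 < q := by positivity
  refine ⟨κ⁻¹ * 2 ^ ((1/(p-1))^2) * K ^ (-(1/(p-1))) * 2 * 4 ^ q, by positivity, ?_⟩
  intro T hT μ hμloc u hu z σ hσ hσT
  obtain ⟨humeas, hunn, hae⟩ := hu
  set B := ball z σ with hBdef
  have hμB : μ B ≠ ⊤ := by
    refine (lt_of_le_of_lt (measure_mono ball_subset_closedBall) ?_).ne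
    exact (isCompact_closedBall z σ).measure_lt_top
  set τ : ℝ := σ ^ 2 with hτdef
  have hτ : 0 < τ := by positivity
  have hτT : τ < T := (Real.lt_sqrt hσ.le).1 hσT
  set R : ℝ := max ‖z‖ σ with hRdef
  have hR : 0 < R := lt_of_lt_of_le hσ (le_max_right _ _)
  -- time sequence
  obtain ⟨A, hA_lb, hA_pos, hA_lt, hA_diff⟩ :
      ∃ A : ℕ → ℝ, (∀ k, τ/2 ≤ A k) ∧ (∀ k, 0 < A k) ∧ (∀ k, A k < τ) ∧
        (∀ k : ℕ, A (k+1) - A k = τ * 2 ^ (-(k:ℝ) - 2)) := by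
    refine ⟨fun k => τ - τ * 2 ^ (-(k:ℝ) - 1), ?_, ?_, ?_, ?_⟩
    · intro k
      have h1 : (2:ℝ) ^ (-(k:ℝ) - 1) ≤ 1/2 := by
        have h2 : (2:ℝ) ^ (-(k:ℝ) - 1) ≤ 2 ^ (-(1:ℝ)) := by
          apply Real.rpow_le_rpow_of_exponent_le one_le_two
          have : (0:ℝ) ≤ (k:ℝ) := Nat.cast_nonneg k
          linarith
        rwa [Real.rpow_neg_one, show ((2:ℝ))⁻¹ = 1/2 by norm_num] at h2
      have h2 : τ * 2 ^ (-(k:ℝ) - 1) ≤ τ * (1/2) :=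
        mul_le_mul_of_nonneg_left h1 hτ.le
      simp only
      linarith
    · intro k
      have h1 : (2:ℝ) ^ (-(k:ℝ) - 1) ≤ 1/2 := by
        have h2 : (2:ℝ) ^ (-(k:ℝ) - 1) ≤ 2 ^ (-(1:ℝ)) := by
          apply Real.rpow_le_rpow_of_exponent_le one_le_two
          have : (0:ℝ) ≤ (k:ℝ) := Nat.cast_nonneg k
          linarith
        rwa [Real.rpow_neg_one, show ((2:ℝ))⁻¹ = 1/2 by norm_num] at h2
      have h2 : τ * 2 ^ (-(k:ℝ) - 1) ≤ τ * (1/2) :=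
        mul_le_mul_of_nonneg_left h1 hτ.le
      simp only
      linarith
    · intro k
      exact sub_lt_self _ (by positivity)
    · intro k
      simp only
      push_cast
      have h1 : (2:ℝ) ^ (-(k:ℝ) - 1) = 2 ^ (-(k:ℝ) - 2) * 2 := by
        rw [← Real.rpow_add_one (by norm_num : (2:ℝ) ≠ 0)]
        ring_nf
      have h2 : (2:ℝ) ^ (-((k:ℝ) + 1) - 1) = 2 ^ (-(k:ℝ) - 2) := by ring_nf
      rw [h2, h1]
      ring
  -- the iteration sequence
  set cc : ℝ := K * R ^ (-γ) * τ with hccdef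
  have hcc : 0 < cc := by positivity
  obtain ⟨m, hm0, hmrec⟩ :
      ∃ m : ℕ → ℝ, m 0 = κ * σ ^ (-(N:ℝ)) * (μ B).toReal ∧
        ∀ k, m (k+1) = cc * 2 ^ (-(k:ℝ)) * m k ^ p :=
    ⟨fun k => Nat.rec (κ * σ ^ (-(N:ℝ)) * (μ B).toReal)
      (fun k mk => cc * 2 ^ (-(k:ℝ)) * mk ^ p) k, rfl, fun k => rfl⟩
  have hmnn : ∀ k, 0 ≤ m k := by
    intro k
    induction k with
    | zero => rw [hm0]; positivity
    | succ k ih => rw [hmrec k]; positivity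
  -- the relation c₀ = cc with (2R)^{-γ}
  have hc₀ : κ * ω * (2*R) ^ (-γ) / 2 ^ N * τ / 4 = cc := by
    rw [hccdef, hKdef, Real.mul_rpow (by norm_num) hR.le]
    ring
  have hyB2R : ∀ y ∈ B, ‖y‖ ≤ 2 * R := by
    intro y hy
    have h1 : ‖y - z‖ < σ := by rw [← dist_eq_norm]; exact mem_ball.1 hy
    have h2 : ‖y‖ ≤ ‖z‖ + ‖y - z‖ := by
      simpa using norm_add_le z (y - z)
    have h3 : ‖z‖ ≤ R := le_max_left _ _
    have h4 : σ ≤ R := le_max_right _ _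
    linarith
  have hτσ : (τ:ℝ) ^ (-(N:ℝ)/2) = σ ^ (-(N:ℝ)) := by
    rw [hτdef, ← Real.rpow_natCast σ 2, ← Real.rpow_mul hσ.le]
    congr 1
    ring
  have hGnn : ∀ (w : EuclideanSpace ℝ (Fin N)) (t : ℝ), 0 < t → 0 ≤ G N w t := by
    intro w t ht
    unfold G
    positivity
  -- main induction
  have main : ∀ k : ℕ, ∀ᵐ x : EuclideanSpace ℝ (Fin N) ∂volume,
      x ∈ B → ∀ s : ℝ, A k < s → s ≤ τ → m k ≤ u x s := by
    intro k
    induction k with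
    | zero =>
      filter_upwards [hae] with x hx hxB s hs1 hs2
      have hs0 : 0 < s := lt_trans (hA_pos 0) hs1
      have hsT : s < T := lt_of_le_of_lt hs2 hτT
      obtain ⟨hfin, hid⟩ := hx s hs0 hsT
      have key : ENNReal.ofReal (m 0) ≤ ENNReal.ofReal (u x s) := by
        rw [hid]
        refine le_trans ?_ le_self_add
        calc ENNReal.ofReal (m 0)
            = ENNReal.ofReal (κ * σ ^ (-(N:ℝ))) * μ B := by
              rw [hm0, ENNReal.ofReal_mul (by positivity), ENNReal.ofReal_toReal hμB]
          _ = ∫⁻ _ in B, ENNReal.ofReal (κ * σ ^ (-(N:ℝ))) ∂μ :=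
              (setLIntegral_const _ _).symm
          _ ≤ ∫⁻ y in B, ENNReal.ofReal (G N (x - y) s) ∂μ := by
              refine lintegral_mono_ae ((ae_restrict_iff' measurableSet_ball).2
                (Filter.Eventually.of_forall fun y hy => ?_))
              apply ENNReal.ofReal_le_ofReal
              have hxy : ‖x - y‖ < 2 * σ := by
                have h1 : dist x z < σ := mem_ball.1 hxB
                have h2 : dist y z < σ := mem_ball.1 hy
                calc ‖x - y‖ = dist x y := (dist_eq_norm x y).symm
                  _ ≤ dist x z + dist y z := dist_triangle_right x y z
                  _ < 2 * σ := by linarith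
              have hw : ‖x - y‖ ^ 2 ≤ 16 * s := by
                have hA0 : τ / 2 ≤ A 0 := hA_lb 0
                have hτs : τ = σ ^ 2 := hτdef
                have hxy2 : ‖x - y‖ ^ 2 < (2*σ)^2 := by
                  nlinarith [norm_nonneg (x - y), hxy, hσ]
                have : ‖x - y‖ ^ 2 < 16 * s := by
                  calc ‖x - y‖ ^ 2 < (2*σ)^2 := hxy2
                    _ = 4 * τ := by rw [hτs]; ring
                    _ ≤ 8 * A 0 := by linarith [hA_lb 0]
                    _ < 8 * s := by linarith [hs1]
                    _ ≤ 16 * s := by linarith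
                exact this.le
              have := G_lower N (x - y) hs0 hs2 hw
              calc κ * σ ^ (-(N:ℝ)) = κ * τ ^ (-(N:ℝ)/2) := by rw [← hτσ]
                _ ≤ G N (x - y) s := by rw [hκdef]; linarith
          _ ≤ ∫⁻ y, ENNReal.ofReal (G N (x - y) s) ∂μ :=
              setLIntegral_le_lintegral _ _
      exact (ENNReal.ofReal_le_ofReal_iff (hunn x s)).1 key
    | succ k IH =>
      filter_upwards [hae, IH] with x hx hIHx hxB t ht1 ht2
      have ht0 : 0 < t := lt_trans (hA_pos (k+1)) ht1
      have htT : t < T := lt_of_le_of_lt ht2 hτT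
      obtain ⟨hfin, hid⟩ := hx t ht0 htT
      -- the inner bound for each s in (A k, A (k+1))
      have hinner : ∀ s ∈ Set.Ioo (A k) (A (k+1)),
          ENNReal.ofReal (κ * ω * (2*R) ^ (-γ) / 2 ^ N * m k ^ p)
            ≤ ∫⁻ y, ENNReal.ofReal (G N (x - y) (t - s) * ‖y‖ ^ (-γ) * u y s ^ p) := by
        intro s hs
        have hts : 0 < t - s := by
          have : s < A (k+1) := hs.2
          linarith
        set ρ : ℝ := Real.sqrt (t - s) with hρdef
        have hρ0 : 0 < ρ := Real.sqrt_pos.2 hts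
        have hρsq : ρ ^ 2 = t - s := Real.sq_sqrt hts.le
        have hτs : τ = σ ^ 2 := hτdef
        have hρσ : ρ ≤ σ := by
          have h1 : t - s < τ := by
            have h2 := hA_pos k
            have h3 := hs.1
            linarith
          nlinarith [hρ0, hρsq, hσ, h1]
        obtain ⟨cb, hcb⟩ := ball_in_inter z x hxB hρ0 hρσ
        have h0ae : ∀ᵐ y : EuclideanSpace ℝ (Fin N) ∂volume, y ≠ 0 := by
          rw [ae_iff]
          simpa using measure_singleton (0 : EuclideanSpace ℝ (Fin N))
        -- volume of the small ball
        have hvol : volume (ball cb (ρ/2)) = ENNReal.ofReal ((ρ/2) ^ N * ω) := by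
          rw [Measure.addHaar_ball volume cb (by positivity : (0:ℝ) ≤ ρ/2),
            finrank_euclideanSpace_fin, hωdef,
            ENNReal.ofReal_mul (by positivity), ENNReal.ofReal_toReal measure_ball_lt_top.ne]
        -- cancellation identity
        have hρN : (ρ/2) ^ N = (t - s) ^ ((N:ℝ)/2) / 2 ^ N := by
          rw [div_pow]
          congr 1
          rw [hρdef, Real.sqrt_eq_rpow, ← Real.rpow_natCast ((t-s) ^ ((1:ℝ)/2)) N,
            ← Real.rpow_mul hts.le]
          congr 1
          ring
        have hcancel : (t - s) ^ (-(N:ℝ)/2) * (t - s) ^ ((N:ℝ)/2) = 1 := by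
          rw [← Real.rpow_add hts, show -(N:ℝ)/2 + (N:ℝ)/2 = 0 by ring, Real.rpow_zero]
        have hconst : κ * ω * (2*R) ^ (-γ) / 2 ^ N * m k ^ p
            = κ * (t - s) ^ (-(N:ℝ)/2) * (2*R) ^ (-γ) * m k ^ p * ((ρ/2) ^ N * ω) := by
          rw [hρN]
          linear_combination (-(κ * ω * (2*R) ^ (-γ) * m k ^ p) / 2 ^ N) * hcancel
        have hcnn : 0 ≤ κ * (t - s) ^ (-(N:ℝ)/2) * (2*R) ^ (-γ) * m k ^ p :=
          mul_nonneg (mul_nonneg (mul_nonneg hκ.le (Real.rpow_nonneg hts.le _))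
            (Real.rpow_nonneg (by positivity) _)) (Real.rpow_nonneg (hmnn k) _)
        calc ENNReal.ofReal (κ * ω * (2*R) ^ (-γ) / 2 ^ N * m k ^ p)
            = ENNReal.ofReal (κ * (t - s) ^ (-(N:ℝ)/2) * (2*R) ^ (-γ) * m k ^ p)
                * volume (ball cb (ρ/2)) := by
              rw [hvol, ← ENNReal.ofReal_mul hcnn, hconst]
          _ = ∫⁻ _ in ball cb (ρ/2),
                ENNReal.ofReal (κ * (t - s) ^ (-(N:ℝ)/2) * (2*R) ^ (-γ) * m k ^ p) :=
              (setLIntegral_const _ _).symm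
          _ ≤ ∫⁻ y in ball cb (ρ/2),
                ENNReal.ofReal (G N (x - y) (t - s) * ‖y‖ ^ (-γ) * u y s ^ p) := by
              refine lintegral_mono_ae ((ae_restrict_iff' measurableSet_ball).2 ?_)
              filter_upwards [h0ae, IH] with y hy0 hyIH hymem
              have hyin := hcb hymem
              have hyx : y ∈ ball x ρ := hyin.1
              have hyB : y ∈ B := hyin.2
              apply ENNReal.ofReal_le_ofReal
              -- three factor bounds
              have hG : κ * (t - s) ^ (-(N:ℝ)/2) ≤ G N (x - y) (t - s) := by
                have hxy : ‖x - y‖ < ρ := by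
                  rw [← dist_eq_norm, dist_comm]; exact mem_ball.1 hyx
                have hw : ‖x - y‖ ^ 2 ≤ 16 * (t - s) := by
                  nlinarith [norm_nonneg (x - y), hρsq]
                have := G_lower N (x - y) hts le_rfl hw
                rw [hκdef]
                linarith
              have hY : (2*R) ^ (-γ) ≤ ‖y‖ ^ (-γ) := by
                apply Real.rpow_le_rpow_of_nonpos (norm_pos_iff.2 hy0) (hyB2R y hyB)
                linarith
              have hU : m k ^ p ≤ u y s ^ p := by
                apply Real.rpow_le_rpow (hmnn k) _ (by linarith)
                exact hyIH hyB s hs.1 (le_trans hs.2.le (hA_lt (k+1)).le)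
              have hGnn' := hGnn (x - y) (t - s) hts
              have h1 : (0:ℝ) ≤ (2*R) ^ (-γ) := Real.rpow_nonneg (by positivity) _
              have h2 : (0:ℝ) ≤ m k ^ p := Real.rpow_nonneg (hmnn k) _
              have h3 : (0:ℝ) ≤ κ * (t - s) ^ (-(N:ℝ)/2) := by positivity
              calc κ * (t - s) ^ (-(N:ℝ)/2) * (2*R) ^ (-γ) * m k ^ p
                  ≤ G N (x - y) (t - s) * ‖y‖ ^ (-γ) * m k ^ p := by
                    apply mul_le_mul_of_nonneg_right _ h2
                    exact mul_le_mul hG hY h1 hGnn'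
                _ ≤ G N (x - y) (t - s) * ‖y‖ ^ (-γ) * u y s ^ p := by
                    apply mul_le_mul_of_nonneg_left hU
                    exact mul_nonneg hGnn' (Real.rpow_nonneg (norm_nonneg y) _)
          _ ≤ ∫⁻ y, ENNReal.ofReal (G N (x - y) (t - s) * ‖y‖ ^ (-γ) * u y s ^ p) :=
              setLIntegral_le_lintegral _ _
      -- assemble the time integral
      have key : ENNReal.ofReal (m (k+1)) ≤ ENNReal.ofReal (u x t) := by
        rw [hid]
        refine le_trans ?_ le_add_self
        have hm1 : m (k+1) = κ * ω * (2*R) ^ (-γ) / 2 ^ N * m k ^ p * (τ * 2 ^ (-(k:ℝ) - 2)) := by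
          rw [hmrec k, ← hc₀]
          have h22 : (2:ℝ) ^ (-(k:ℝ) - 2) = 2 ^ (-(k:ℝ)) / 4 := by
            have h23 : (2:ℝ) ^ (-(k:ℝ) - 2) * 2 * 2 = 2 ^ (-(k:ℝ)) := by
              rw [← Real.rpow_add_one (by norm_num : (2:ℝ) ≠ 0),
                ← Real.rpow_add_one (by norm_num : (2:ℝ) ≠ 0)]
              ring_nf
            linarith
          rw [h22]
          ring
        calc ENNReal.ofReal (m (k+1))
            = ENNReal.ofReal (κ * ω * (2*R) ^ (-γ) / 2 ^ N * m k ^ p)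
                * ENNReal.ofReal (τ * 2 ^ (-(k:ℝ) - 2)) := by
              rw [hm1, ENNReal.ofReal_mul
                (mul_nonneg (by positivity) (Real.rpow_nonneg (hmnn k) _))]
          _ = ENNReal.ofReal (κ * ω * (2*R) ^ (-γ) / 2 ^ N * m k ^ p)
                * volume (Set.Ioo (A k) (A (k+1))) := by
              rw [Real.volume_Ioo, hA_diff k]
          _ = ∫⁻ _ in Set.Ioo (A k) (A (k+1)),
                ENNReal.ofReal (κ * ω * (2*R) ^ (-γ) / 2 ^ N * m k ^ p) :=
              (setLIntegral_const _ _).symm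
          _ ≤ ∫⁻ s in Set.Ioo (A k) (A (k+1)),
                ∫⁻ y, ENNReal.ofReal (G N (x - y) (t - s) * ‖y‖ ^ (-γ) * u y s ^ p) := by
              refine lintegral_mono_ae ((ae_restrict_iff' measurableSet_Ioo).2
                (Filter.Eventually.of_forall fun s hs => hinner s hs))
          _ ≤ ∫⁻ s in Set.Ioo 0 t,
                ∫⁻ y, ENNReal.ofReal (G N (x - y) (t - s) * ‖y‖ ^ (-γ) * u y s ^ p) := by
              apply lintegral_mono_set
              intro s hs
              exact ⟨lt_trans (hA_pos k) hs.1, lt_trans hs.2 ht1⟩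
      exact (ENNReal.ofReal_le_ofReal_iff (hunn x t)).1 key
  -- pick a good point
  have final : ∀ᵐ x : EuclideanSpace ℝ (Fin N) ∂volume,
      x ∈ B → ∀ k : ℕ, m k ≤ u x τ := by
    have h := ae_all_iff.2 main
    filter_upwards [h] with x hx hxB k
    exact hx k hxB τ (hA_lt k) le_rfl
  obtain ⟨x₀, hx₀B, hx₀⟩ : ∃ x₀ ∈ B, ∀ k : ℕ, m k ≤ u x₀ τ := by
    have hnull : volume {x : EuclideanSpace ℝ (Fin N) |
        ¬(x ∈ B → ∀ k : ℕ, m k ≤ u x τ)} = 0 := ae_iff.1 final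
    have hpos : 0 < volume B := measure_ball_pos _ _ hσ
    have hne : volume (B ∩ {x | ∀ k : ℕ, m k ≤ u x τ}) ≠ 0 := by
      intro h0
      have hcover : B ⊆ (B ∩ {x | ∀ k : ℕ, m k ≤ u x τ}) ∪
          {x : EuclideanSpace ℝ (Fin N) | ¬(x ∈ B → ∀ k : ℕ, m k ≤ u x τ)} := by
        intro x hx
        by_cases hP : ∀ k : ℕ, m k ≤ u x τ
        · exact Or.inl ⟨hx, hP⟩
        · exact Or.inr (fun hc => hP (hc hx))
      have hle := le_trans
        (measure_mono (μ := (volume : Measure (EuclideanSpace ℝ (Fin N)))) hcover)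
        (measure_union_le _ _)
      rw [h0, hnull, add_zero] at hle
      exact absurd (le_antisymm hle zero_le) hpos.ne'
    obtain ⟨x₀, hx₀⟩ := nonempty_of_measure_ne_zero hne
    exact ⟨x₀, hx₀.1, hx₀.2⟩
  -- apply the recursion bound
  have hm0nn : 0 ≤ m 0 := by rw [hm0]; positivity
  have hkey : m 0 ≤ 2 ^ ((1/(p-1))^2) * cc ^ (-(1/(p-1))) :=
    recursion_bound hp hcc m hm0nn hmrec hx₀
  -- unfold cc
  have hDσ : cc ^ (-(1/(p-1))) = K ^ (-(1/(p-1))) * R ^ q * σ ^ (-(2/(p-1))) := by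
    rw [hccdef, hτdef, Real.mul_rpow (mul_nonneg hK.le (Real.rpow_nonneg hR.le _))
      (by positivity), Real.mul_rpow hK.le (Real.rpow_nonneg hR.le _)]
    congr 1
    · congr 1
      rw [← Real.rpow_mul hR.le]
      congr 1
      rw [hqdef]
      field_simp
    · rw [← Real.rpow_natCast σ 2, ← Real.rpow_mul hσ.le]
      congr 1
      push_cast
      ring
  rw [hm0, hDσ] at hkey
  have hiden : κ⁻¹ * σ ^ ((N:ℝ)) * (κ * σ ^ (-(N:ℝ))) = 1 := by
    have h1 : σ ^ ((N:ℝ)) * σ ^ (-(N:ℝ)) = 1 := by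
      rw [← Real.rpow_add hσ]
      simp
    calc κ⁻¹ * σ ^ ((N:ℝ)) * (κ * σ ^ (-(N:ℝ)))
        = (κ⁻¹ * κ) * (σ ^ ((N:ℝ)) * σ ^ (-(N:ℝ))) := by ring
      _ = 1 := by rw [inv_mul_cancel₀ hκ.ne', h1, mul_one]
  have hμBr : (μ B).toReal ≤ κ⁻¹ * σ ^ ((N:ℝ)) *
      (2 ^ ((1/(p-1))^2) * (K ^ (-(1/(p-1))) * R ^ q * σ ^ (-(2/(p-1))))) := by
    calc (μ B).toReal
        = κ⁻¹ * σ ^ ((N:ℝ)) * (κ * σ ^ (-(N:ℝ)) * (μ B).toReal) := by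
          rw [show κ⁻¹ * σ ^ ((N:ℝ)) * (κ * σ ^ (-(N:ℝ)) * (μ B).toReal)
            = (κ⁻¹ * σ ^ ((N:ℝ)) * (κ * σ ^ (-(N:ℝ)))) * (μ B).toReal by ring, hiden,
            one_mul]
      _ ≤ κ⁻¹ * σ ^ ((N:ℝ)) *
          (2 ^ ((1/(p-1))^2) * (K ^ (-(1/(p-1))) * R ^ q * σ ^ (-(2/(p-1))))) := by
          apply mul_le_mul_of_nonneg_left hkey (by positivity)
  -- the average bound
  have havgb := avg_norm_rpow_lower hN hq.le z hσ
  rw [← hRdef] at havgb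
  have havgpos : 0 < ⨍ x in B, ‖x‖ ^ q := by
    nlinarith [Real.rpow_pos_of_pos hR q, havgb,
      Real.rpow_pos_of_pos (show (0:ℝ) < 4 by norm_num) q]
  -- final real inequality
  have hσsplit : σ ^ ((N:ℝ) - 2/(p-1)) = σ ^ ((N:ℝ)) * σ ^ (-(2/(p-1))) := by
    rw [← Real.rpow_add hσ, ← sub_eq_add_neg]
  have hreal : (⨍ x in B, ‖x‖ ^ q)⁻¹ * (μ B).toReal ≤
      (κ⁻¹ * 2 ^ ((1/(p-1))^2) * K ^ (-(1/(p-1))) * 2 * 4 ^ q) * σ ^ ((N:ℝ) - 2/(p-1)) := by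
    have hKe : (0:ℝ) ≤ K ^ (-(1/(p-1))) := Real.rpow_nonneg hK.le _
    have hσe : (0:ℝ) ≤ σ ^ (-(2/(p-1))) := Real.rpow_nonneg hσ.le _
    have hσN : (0:ℝ) ≤ σ ^ ((N:ℝ)) := Real.rpow_nonneg hσ.le _
    have h2b : (0:ℝ) ≤ 2 ^ ((1/(p-1))^2) := Real.rpow_nonneg (by norm_num) _
    have h4q : (0:ℝ) ≤ 4 ^ q := Real.rpow_nonneg (by norm_num) _
    have hstep : κ⁻¹ * σ ^ ((N:ℝ)) *
        (2 ^ ((1/(p-1))^2) * (K ^ (-(1/(p-1))) * R ^ q * σ ^ (-(2/(p-1))))) ≤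
        κ⁻¹ * σ ^ ((N:ℝ)) *
        (2 ^ ((1/(p-1))^2) * (K ^ (-(1/(p-1))) * (2 * 4 ^ q * ⨍ x in B, ‖x‖ ^ q)
          * σ ^ (-(2/(p-1))))) := by
      apply mul_le_mul_of_nonneg_left _ (by positivity)
      apply mul_le_mul_of_nonneg_left _ h2b
      apply mul_le_mul_of_nonneg_right _ hσe
      exact mul_le_mul_of_nonneg_left havgb hKe
    calc (⨍ x in B, ‖x‖ ^ q)⁻¹ * (μ B).toReal
        ≤ (⨍ x in B, ‖x‖ ^ q)⁻¹ * (κ⁻¹ * σ ^ ((N:ℝ)) *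
            (2 ^ ((1/(p-1))^2) * (K ^ (-(1/(p-1))) * (2 * 4 ^ q * ⨍ x in B, ‖x‖ ^ q)
              * σ ^ (-(2/(p-1)))))) :=
          mul_le_mul_of_nonneg_left (le_trans hμBr hstep) (inv_nonneg.2 havgpos.le)
      _ = (κ⁻¹ * 2 ^ ((1/(p-1))^2) * K ^ (-(1/(p-1))) * 2 * 4 ^ q) *
            (σ ^ ((N:ℝ)) * σ ^ (-(2/(p-1)))) *
            ((⨍ x in B, ‖x‖ ^ q)⁻¹ * ⨍ x in B, ‖x‖ ^ q) := by ring
      _ = (κ⁻¹ * 2 ^ ((1/(p-1))^2) * K ^ (-(1/(p-1))) * 2 * 4 ^ q) *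
            σ ^ ((N:ℝ) - 2/(p-1)) := by
          rw [inv_mul_cancel₀ havgpos.ne', hσsplit, mul_one]
  -- conclude in ℝ≥0∞
  have hgoal : ENNReal.ofReal ((⨍ x in B, ‖x‖ ^ q)⁻¹) * μ B
      = ENNReal.ofReal ((⨍ x in B, ‖x‖ ^ q)⁻¹ * (μ B).toReal) := by
    rw [ENNReal.ofReal_mul (inv_nonneg.2 havgpos.le), ENNReal.ofReal_toReal hμB]
  rw [hgoal]
  exact ENNReal.ofReal_le_ofReal hreal
end

section
/- Let N ≥ 1 and 0 < γ < min{2, N}. (i) If p ≥ p_γ := 1 + (2−γ)/N and μ = δ₀ is the Dirac measure concentrated at the origin, then for every T > 0 there is no solution of the Hardy parabolic equation ∂_t u − Δu = |x|^{-γ} u^p with initial data μ on ℝ^N × [0,T). (ii) If p ≥ p₀ := 1 + 2/N, z ∈ ℝ^N, and μ = δ_z is the Dirac measure concentrated at z, then for every T > 0 there is no solution of the Hardy parabolic equation ∂_t u − Δu = |x|^{-γ} u^p with initial data μ on ℝ^N × [0,T). -/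
open MeasureTheory Real
open scoped ENNReal NNReal

lemma G_nonneg (N : ℕ) (x : EuclideanSpace ℝ (Fin N)) {t : ℝ} (ht : 0 < t) : 0 ≤ G N x t := by
  unfold G
  have := Real.pi_pos
  positivity

lemma lint_rpow_top (a ε : ℝ) (ha : 1 ≤ a) (hε : 0 < ε) :
    ∫⁻ s in Set.Ioo (0:ℝ) ε, ENNReal.ofReal (s ^ (-a)) = ⊤ := by
  by_contra h
  have hcont : ContinuousOn (fun s : ℝ => s ^ (-a)) (Set.Ioo 0 ε) := by
    intro x hx
    exact (Real.continuousAt_rpow_const x (-a) (Or.inl (ne_of_gt hx.1))).continuousWithinAt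
  have hint : IntegrableOn (fun s : ℝ => s ^ (-a)) (Set.Ioo 0 ε) := by
    refine ⟨hcont.aestronglyMeasurable measurableSet_Ioo, ?_⟩
    rw [hasFiniteIntegral_iff_norm]
    have heq : ∀ᵐ s ∂(volume.restrict (Set.Ioo (0:ℝ) ε)),
        ENNReal.ofReal ‖s ^ (-a)‖ = ENNReal.ofReal (s ^ (-a)) := by
      filter_upwards [ae_restrict_mem measurableSet_Ioo] with s hs
      rw [Real.norm_eq_abs, abs_of_nonneg (Real.rpow_nonneg hs.1.le _)]
    rw [lintegral_congr_ae heq]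
    exact lt_top_iff_ne_top.2 h
  have := (intervalIntegral.integrableOn_Ioo_rpow_iff hε).1 hint
  linarith

lemma key_top (N : ℕ) (hN : 1 ≤ N) (γ p β c : ℝ) (hγ0 : 0 < γ) (hp1 : 1 ≤ p) (hc : 0 < c)
    (hcrit : 2 ≤ N * (p - 1) + β)
    (z x₀ : EuclideanSpace ℝ (Fin N)) (t : ℝ) (ht : 0 < t)
    (hlow : ∀ s ∈ Set.Ioo (0:ℝ) (t/2),
      ∀ y ∈ Metric.ball z (Real.sqrt s) \ {(0 : EuclideanSpace ℝ (Fin N))},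
        c * s ^ (-(β/2)) ≤ ‖y‖ ^ (-γ))
    (u : EuclideanSpace ℝ (Fin N) → ℝ → ℝ) (hu_nn : ∀ x s, 0 ≤ u x s)
    (hu_low : ∀ᵐ y ∂(volume : Measure (EuclideanSpace ℝ (Fin N))),
      ∀ s : ℝ, 0 < s → s < t → G N (y - z) s ≤ u y s) :
    (∫⁻ s in Set.Ioo (0:ℝ) t,
       ∫⁻ y, ENNReal.ofReal (G N (x₀ - y) (t - s) * ‖y‖ ^ (-γ) * u y s ^ p)) = ⊤ := by
  haveI : Nontrivial (EuclideanSpace ℝ (Fin N)) := by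
    apply Module.nontrivial_of_finrank_pos (R := ℝ)
    rw [finrank_euclideanSpace_fin]
    omega
  set M : ℝ := ‖x₀ - z‖ + Real.sqrt (t/2) with hM
  have hM0 : 0 < M := by
    have h1 : 0 < Real.sqrt (t/2) := Real.sqrt_pos.2 (by linarith)
    have h2 := norm_nonneg (x₀ - z)
    rw [hM]; linarith
  set K₁ : ℝ := (4 * Real.pi * t) ^ (-(N:ℝ)/2) * Real.exp (-M ^ 2 / (2 * t)) with hK₁def
  have hpi := Real.pi_pos
  have hK₁ : 0 < K₁ := by rw [hK₁def]; positivity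
  set Lo : ℝ → ℝ := fun s =>
    K₁ * (c * s ^ (-(β/2))) * ((4 * Real.pi * s) ^ (-(N:ℝ)/2) * Real.exp (-(4⁻¹:ℝ))) ^ p
    with hLodef
  have hLo_nn : ∀ s : ℝ, 0 < s → 0 ≤ Lo s := by
    intro s hs
    simp only [hLodef]
    positivity
  set C : ℝ := K₁ * c * ((4 * Real.pi) ^ (-(N:ℝ)/2) * Real.exp (-(4⁻¹:ℝ))) ^ p with hCdef
  have hC : 0 < C := by rw [hCdef]; positivity
  set a : ℝ := (N * (p - 1) + β) / 2 with hadef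
  have ha : 1 ≤ a := by rw [hadef]; linarith
  have halg : ∀ s : ℝ, 0 < s →
      Lo s * (Real.sqrt s) ^ (Module.finrank ℝ (EuclideanSpace ℝ (Fin N))) = C * s ^ (-a) := by
    intro s hs
    have hsqrt : (Real.sqrt s : ℝ) ^ (Module.finrank ℝ (EuclideanSpace ℝ (Fin N)))
        = s ^ ((1:ℝ)/2 * N) := by
      rw [finrank_euclideanSpace_fin, Real.sqrt_eq_rpow,
        ← Real.rpow_natCast (s ^ ((1:ℝ)/2)) N, ← Real.rpow_mul hs.le]
    have hbase : ((4 * Real.pi * s) ^ (-(N:ℝ)/2) * Real.exp (-(4⁻¹:ℝ))) ^ p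
        = ((4 * Real.pi) ^ (-(N:ℝ)/2) * Real.exp (-(4⁻¹:ℝ))) ^ p * s ^ ((-(N:ℝ)/2) * p) := by
      rw [Real.mul_rpow (by positivity) hs.le]
      rw [show (4 * Real.pi : ℝ) ^ (-(N:ℝ)/2) * s ^ (-(N:ℝ)/2) * Real.exp (-(4⁻¹:ℝ))
          = ((4 * Real.pi : ℝ) ^ (-(N:ℝ)/2) * Real.exp (-(4⁻¹:ℝ))) * s ^ (-(N:ℝ)/2) by ring]
      rw [Real.mul_rpow (by positivity) (Real.rpow_nonneg hs.le _), ← Real.rpow_mul hs.le]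
    simp only [hLodef]
    rw [hsqrt, hbase, hCdef,
      show (-a) = (-(β/2)) + ((-(N:ℝ)/2) * p + (1:ℝ)/2 * N) by rw [hadef]; ring,
      Real.rpow_add hs, Real.rpow_add hs]
    ring
  set V₁ : ℝ≥0∞ := volume (Metric.ball (0 : EuclideanSpace ℝ (Fin N)) 1) with hV₁def
  have hV₁0 : V₁ ≠ 0 := (Metric.measure_ball_pos volume _ one_pos).ne'
  have hV₁top : V₁ ≠ ⊤ := measure_ball_lt_top.ne
  have main : ∀ s ∈ Set.Ioo (0:ℝ) (t/2),
      ENNReal.ofReal (C * s ^ (-a)) * V₁ ≤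
        ∫⁻ y, ENNReal.ofReal (G N (x₀ - y) (t - s) * ‖y‖ ^ (-γ) * u y s ^ p) := by
    intro s hs
    have hts : 0 < t - s := by have := hs.2; linarith
    have hts2 : t / 2 ≤ t - s := by have := hs.2; linarith
    set B : Set (EuclideanSpace ℝ (Fin N)) :=
      Metric.ball z (Real.sqrt s) \ {(0 : EuclideanSpace ℝ (Fin N))} with hBdef
    have hBmeas : MeasurableSet B := measurableSet_ball.diff (measurableSet_singleton _)
    have hBvol : volume B
        = ENNReal.ofReal ((Real.sqrt s) ^ (Module.finrank ℝ (EuclideanSpace ℝ (Fin N)))) * V₁ := by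
      rw [hBdef, measure_diff_null (measure_singleton _)]
      exact Measure.addHaar_ball volume z (Real.sqrt_nonneg s)
    have hpoint : ∀ y ∈ B, G N (y - z) s ≤ u y s →
        Lo s ≤ G N (x₀ - y) (t - s) * ‖y‖ ^ (-γ) * u y s ^ p := by
      intro y hy hyu
      have hyz : ‖y - z‖ < Real.sqrt s := by
        have := Metric.mem_ball.1 hy.1
        rwa [dist_eq_norm] at this
      have hG1 : K₁ ≤ G N (x₀ - y) (t - s) := by
        have hf1 : (4 * Real.pi * t) ^ (-(N:ℝ)/2) ≤ (4 * Real.pi * (t - s)) ^ (-(N:ℝ)/2) := by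
          apply Real.rpow_le_rpow_of_nonpos (by positivity)
            (by nlinarith [hs.1])
          have : (0:ℝ) ≤ (N:ℝ) := Nat.cast_nonneg N
          linarith
        have hxy : ‖x₀ - y‖ ≤ M := by
          have h2 : ‖z - y‖ < Real.sqrt s := by rwa [norm_sub_rev]
          have h3 : Real.sqrt s ≤ Real.sqrt (t/2) := Real.sqrt_le_sqrt hs.2.le
          calc ‖x₀ - y‖ = ‖(x₀ - z) + (z - y)‖ := by rw [sub_add_sub_cancel]
            _ ≤ ‖x₀ - z‖ + ‖z - y‖ := norm_add_le _ _
            _ ≤ M := by rw [hM]; linarith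
        have hf2 : Real.exp (-M ^ 2 / (2 * t)) ≤ Real.exp (-‖x₀ - y‖ ^ 2 / (4 * (t - s))) := by
          apply Real.exp_le_exp.2
          rw [neg_div, neg_div, neg_le_neg_iff]
          exact div_le_div₀ (by positivity) (pow_le_pow_left₀ (norm_nonneg _) hxy 2)
            (by linarith) (by linarith)
        calc K₁ = (4 * Real.pi * t) ^ (-(N:ℝ)/2) * Real.exp (-M ^ 2 / (2 * t)) := hK₁def
          _ ≤ (4 * Real.pi * (t - s)) ^ (-(N:ℝ)/2) * Real.exp (-‖x₀ - y‖ ^ 2 / (4 * (t - s))) :=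
            mul_le_mul hf1 hf2 (Real.exp_nonneg _) (Real.rpow_nonneg (by positivity) _)
          _ = G N (x₀ - y) (t - s) := rfl
      have h4πs : (0:ℝ) < 4 * Real.pi * s := mul_pos (by positivity) hs.1
      have hG2 : (4 * Real.pi * s) ^ (-(N:ℝ)/2) * Real.exp (-(4⁻¹:ℝ)) ≤ G N (y - z) s := by
        unfold G
        apply mul_le_mul_of_nonneg_left _ (Real.rpow_nonneg h4πs.le _)
        apply Real.exp_le_exp.2
        rw [neg_div, neg_le_neg_iff]
        rw [div_le_iff₀ (by linarith [hs.1] : (0:ℝ) < 4 * s)]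
        have h1 : ‖y - z‖ ^ 2 ≤ (Real.sqrt s) ^ 2 :=
          pow_le_pow_left₀ (norm_nonneg _) hyz.le 2
        rw [Real.sq_sqrt hs.1.le] at h1
        linarith
      have hmid : c * s ^ (-(β/2)) ≤ ‖y‖ ^ (-γ) := hlow s hs y hy
      have h3 : ((4 * Real.pi * s) ^ (-(N:ℝ)/2) * Real.exp (-(4⁻¹:ℝ))) ^ p ≤ u y s ^ p :=
        Real.rpow_le_rpow (mul_nonneg (Real.rpow_nonneg h4πs.le _) (Real.exp_nonneg _))
          (hG2.trans hyu) (by linarith)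
      have hGnn : 0 ≤ G N (x₀ - y) (t - s) := G_nonneg N _ hts
      calc Lo s = K₁ * (c * s ^ (-(β/2)))
            * ((4 * Real.pi * s) ^ (-(N:ℝ)/2) * Real.exp (-(4⁻¹:ℝ))) ^ p := by
            simp only [hLodef]
        _ ≤ (G N (x₀ - y) (t - s) * ‖y‖ ^ (-γ)) * u y s ^ p := by
            have hynn : (0:ℝ) ≤ ‖y‖ ^ (-γ) := Real.rpow_nonneg (norm_nonneg _) _
            apply mul_le_mul _ h3
              (Real.rpow_nonneg (mul_nonneg (Real.rpow_nonneg h4πs.le _) (Real.exp_nonneg _)) _)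
              (mul_nonneg hGnn hynn)
            exact mul_le_mul hG1 hmid
              (mul_nonneg hc.le (Real.rpow_nonneg hs.1.le _)) hGnn
        _ = G N (x₀ - y) (t - s) * ‖y‖ ^ (-γ) * u y s ^ p := by ring
    calc ENNReal.ofReal (C * s ^ (-a)) * V₁
        = ENNReal.ofReal (Lo s * (Real.sqrt s) ^ (Module.finrank ℝ (EuclideanSpace ℝ (Fin N)))) * V₁ := by
          rw [halg s hs.1]
      _ = ENNReal.ofReal (Lo s) * volume B := by
          rw [ENNReal.ofReal_mul (hLo_nn s hs.1), hBvol, mul_assoc]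
      _ = ∫⁻ _ in B, ENNReal.ofReal (Lo s) := (setLIntegral_const B _).symm
      _ ≤ ∫⁻ y in B, ENNReal.ofReal (G N (x₀ - y) (t - s) * ‖y‖ ^ (-γ) * u y s ^ p) := by
          apply lintegral_mono_ae
          filter_upwards [ae_restrict_mem hBmeas, ae_restrict_of_ae hu_low] with y hyB hyu
          exact ENNReal.ofReal_le_ofReal (hpoint y hyB (hyu s hs.1 (by linarith [hs.2])))
      _ ≤ ∫⁻ y, ENNReal.ofReal (G N (x₀ - y) (t - s) * ‖y‖ ^ (-γ) * u y s ^ p) :=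
          setLIntegral_le_lintegral _ _
  refine top_le_iff.1 ?_
  have hconst_ne : ENNReal.ofReal C * V₁ ≠ 0 :=
    mul_ne_zero (ENNReal.ofReal_pos.2 hC).ne' hV₁0
  have hconst_top : ENNReal.ofReal C * V₁ ≠ ⊤ :=
    ENNReal.mul_ne_top ENNReal.ofReal_ne_top hV₁top
  calc (⊤:ℝ≥0∞)
      = (ENNReal.ofReal C * V₁) * ∫⁻ s in Set.Ioo (0:ℝ) (t/2), ENNReal.ofReal (s ^ (-a)) := by
        rw [lint_rpow_top a (t/2) ha (by linarith), ENNReal.mul_top hconst_ne]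
    _ = ∫⁻ s in Set.Ioo (0:ℝ) (t/2), (ENNReal.ofReal C * V₁) * ENNReal.ofReal (s ^ (-a)) :=
        (lintegral_const_mul' _ _ hconst_top).symm
    _ = ∫⁻ s in Set.Ioo (0:ℝ) (t/2), ENNReal.ofReal (C * s ^ (-a)) * V₁ :=
        lintegral_congr fun s => by rw [ENNReal.ofReal_mul hC.le]; ring
    _ ≤ ∫⁻ s in Set.Ioo (0:ℝ) (t/2),
          ∫⁻ y, ENNReal.ofReal (G N (x₀ - y) (t - s) * ‖y‖ ^ (-γ) * u y s ^ p) := by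
        apply lintegral_mono_ae
        filter_upwards [ae_restrict_mem measurableSet_Ioo] with s hs
        exact main s hs
    _ ≤ ∫⁻ s in Set.Ioo (0:ℝ) t,
          ∫⁻ y, ENNReal.ofReal (G N (x₀ - y) (t - s) * ‖y‖ ^ (-γ) * u y s ^ p) :=
        lintegral_mono_set (Set.Ioo_subset_Ioo le_rfl (by linarith))

lemma nonexistence_aux (N : ℕ) (hN : 1 ≤ N) (γ p β c : ℝ) (hγ0 : 0 < γ) (hp1 : 1 ≤ p)
    (hc : 0 < c) (hcrit : 2 ≤ N * (p - 1) + β)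
    (z : EuclideanSpace ℝ (Fin N)) (T : ℝ) (hT : 0 < T)
    (hlow : ∀ s ∈ Set.Ioo (0:ℝ) (T/2/2),
      ∀ y ∈ Metric.ball z (Real.sqrt s) \ {(0 : EuclideanSpace ℝ (Fin N))},
        c * s ^ (-(β/2)) ≤ ‖y‖ ^ (-γ)) :
    ¬∃ u : EuclideanSpace ℝ (Fin N) → ℝ → ℝ, IsSolution N p γ (Measure.dirac z) T u := by
  rintro ⟨u, hmeas, hnn, hae⟩
  have ht : (0:ℝ) < T/2 := by linarith
  have htT : T/2 < T := by linarith
  -- lower bound by the heat kernel, a.e.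
  have hu_low : ∀ᵐ y ∂(volume : Measure (EuclideanSpace ℝ (Fin N))),
      ∀ s : ℝ, 0 < s → s < T/2 → G N (y - z) s ≤ u y s := by
    filter_upwards [hae] with y hy s hs1 hs2
    have h2 := (hy s hs1 (hs2.trans htT)).2
    have hmG : Measurable fun w : EuclideanSpace ℝ (Fin N) =>
        ENNReal.ofReal (G N (y - w) s) := by
      apply Measurable.ennreal_ofReal
      unfold G
      apply Measurable.const_mul
      apply Real.measurable_exp.comp
      apply Measurable.div_const
      apply Measurable.neg
      exact ((continuous_const.sub continuous_id).norm.pow 2).measurable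
    have hd : (∫⁻ w, ENNReal.ofReal (G N (y - w) s) ∂(Measure.dirac z))
        = ENNReal.ofReal (G N (y - z) s) := lintegral_dirac' z hmG
    have hle : ENNReal.ofReal (G N (y - z) s) ≤ ENNReal.ofReal (u y s) := by
      rw [h2]
      unfold hardyRHS
      rw [← hd]
      exact le_self_add
    exact (ENNReal.ofReal_le_ofReal_iff (hnn y s)).1 hle
  -- pick a point where the Duhamel identity holds
  have hvol : (volume : Measure (EuclideanSpace ℝ (Fin N))) ≠ 0 := by
    haveI : Nontrivial (EuclideanSpace ℝ (Fin N)) := by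
      apply Module.nontrivial_of_finrank_pos (R := ℝ)
      rw [finrank_euclideanSpace_fin]; omega
    intro h0
    have := Metric.measure_ball_pos (volume : Measure (EuclideanSpace ℝ (Fin N)))
      (0 : EuclideanSpace ℝ (Fin N)) one_pos
    rw [h0] at this
    simp at this
  haveI : (ae (volume : Measure (EuclideanSpace ℝ (Fin N)))).NeBot := ae_neBot.2 hvol
  obtain ⟨x₀, hx₀⟩ := hae.exists
  have hfin := (hx₀ (T/2) ht htT).1
  have htop := key_top N hN γ p β c hγ0 hp1 hc hcrit z x₀ (T/2) ht hlow u hnn hu_low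
  apply hfin
  unfold hardyRHS
  rw [htop]
  simp

/-- Remark 2, case θ = 2: nonexistence for Dirac initial data.
(i) If `p ≥ p_γ = 1 + (2-γ)/N`, the Hardy parabolic equation with initial data `δ₀` has no
local-in-time solution. (ii) If `p ≥ p₀ = 1 + 2/N` and `z ∈ ℝ^N`, the Hardy parabolic
equation with initial data `δ_z` has no local-in-time solution. -/
theorem statement7 (N : ℕ) (hN : 1 ≤ N) (γ : ℝ)
    (hγ0 : 0 < γ) (hγ2 : γ < 2) (hγN : γ < N) :
    (∀ p : ℝ, 1 + (2 - γ) / N ≤ p → ∀ T : ℝ, 0 < T →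
      ¬∃ u : EuclideanSpace ℝ (Fin N) → ℝ → ℝ,
        IsSolution N p γ (Measure.dirac (0 : EuclideanSpace ℝ (Fin N))) T u) ∧
    (∀ p : ℝ, 1 + 2 / N ≤ p → ∀ z : EuclideanSpace ℝ (Fin N), ∀ T : ℝ, 0 < T →
      ¬∃ u : EuclideanSpace ℝ (Fin N) → ℝ → ℝ,
        IsSolution N p γ (Measure.dirac z) T u) := by
  have hN0 : (0:ℝ) < N := by exact_mod_cast Nat.pos_of_ne_zero (by omega)
  constructor
  · intro p hp T hT
    have hp1 : 1 ≤ p := by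
      have : 0 < (2 - γ) / N := div_pos (by linarith) hN0
      linarith
    have hcrit : 2 ≤ N * (p - 1) + γ := by
      have h1 : (2 - γ) / N ≤ p - 1 := by linarith
      have h2 : 2 - γ ≤ N * (p - 1) := by
        rw [div_le_iff₀ hN0] at h1
        linarith [h1]
      linarith
    apply nonexistence_aux N hN γ p γ 1 hγ0 hp1 one_pos hcrit 0 T hT
    intro s hs y hy
    have hy0 : 0 < ‖y‖ := by
      rcases hy with ⟨_, hy2⟩
      simpa [norm_pos_iff] using hy2
    have hylt : ‖y‖ < Real.sqrt s := by
      have := Metric.mem_ball.1 hy.1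
      simpa [dist_eq_norm] using this
    have hseq : Real.sqrt s ^ (-γ) = s ^ (-(γ/2)) := by
      rw [Real.sqrt_eq_rpow, ← Real.rpow_mul hs.1.le]
      norm_num
      ring_nf
    rw [one_mul, ← hseq]
    exact Real.rpow_le_rpow_of_nonpos hy0 hylt.le (by linarith)
  · intro p hp z T hT
    have hp1 : 1 ≤ p := by
      have : 0 < 2 / (N:ℝ) := div_pos (by norm_num) hN0
      linarith
    have hcrit : 2 ≤ N * (p - 1) + 0 := by
      have h1 : 2 / (N:ℝ) ≤ p - 1 := by linarith
      rw [div_le_iff₀ hN0] at h1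
      linarith
    have hR : 0 < ‖z‖ + Real.sqrt (T/2/2) := by
      have h1 : 0 < Real.sqrt (T/2/2) := Real.sqrt_pos.2 (by linarith)
      have := norm_nonneg z
      linarith
    apply nonexistence_aux N hN γ p 0 ((‖z‖ + Real.sqrt (T/2/2)) ^ (-γ)) hγ0 hp1
      (Real.rpow_pos_of_pos hR _) hcrit z T hT
    intro s hs y hy
    have hy0 : 0 < ‖y‖ := by
      rcases hy with ⟨_, hy2⟩
      simpa [norm_pos_iff] using hy2
    have hyz : ‖y - z‖ < Real.sqrt s := by
      have := Metric.mem_ball.1 hy.1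
      simpa [dist_eq_norm] using this
    have hyle : ‖y‖ ≤ ‖z‖ + Real.sqrt (T/2/2) := by
      have h3 : Real.sqrt s ≤ Real.sqrt (T/2/2) := Real.sqrt_le_sqrt hs.2.le
      calc ‖y‖ = ‖z + (y - z)‖ := by rw [add_sub_cancel]
        _ ≤ ‖z‖ + ‖y - z‖ := norm_add_le _ _
        _ ≤ ‖z‖ + Real.sqrt (T/2/2) := by linarith
    have : s ^ (-((0:ℝ)/2)) = 1 := by norm_num
    rw [this, mul_one]
    exact Real.rpow_le_rpow_of_nonpos hy0 hyle (by linarith)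
end

section
/- Let N ≥ 1, p > 1, 0 < γ < min{2, N} and 0 < T < ∞. There exists a constant c_* > 0, depending only on N, with the following property: if μ is a nonnegative Radon measure on ℝ^N, u is a solution of the Hardy parabolic equation ∂_t u − Δu = |x|^{-γ} u^p with initial data μ on ℝ^N × [0,T), z ∈ ℝ^N, and ρ > 0 satisfies (2ρ)² < T, then u(x + z, (2ρ)²) ≥ c_* G(x, ρ²) μ(B(z,ρ)) for almost every x ∈ ℝ^N. -/
open MeasureTheory Real
open scoped ENNReal NNReal

lemma key (N : ℕ) {ρ : ℝ} (hρ : 0 < ρ) (x w : EuclideanSpace ℝ (Fin N)) (hw : ‖w‖ ≤ ρ) :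
    (4:ℝ) ^ (-(N:ℝ)/2) * Real.exp (-(1/8)) * G N x (ρ^2) ≤ G N (x + w) ((2*ρ)^2) := by
  have hπ := Real.pi_pos
  unfold G
  have h4 : (4 * Real.pi * ((2*ρ)^2)) = 4 * (4 * Real.pi * ρ^2) := by ring
  have heq : ((4:ℝ) * (4 * Real.pi * ρ^2)) ^ (-(N:ℝ)/2)
      = (4:ℝ) ^ (-(N:ℝ)/2) * (4 * Real.pi * ρ^2) ^ (-(N:ℝ)/2) :=
    Real.mul_rpow (by norm_num) (by positivity)
  rw [h4, heq]
  have hexp : Real.exp (-(1/8)) * Real.exp (-‖x‖^2/(4*ρ^2)) ≤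
      Real.exp (-‖x+w‖^2/(4*(2*ρ)^2)) := by
    rw [← Real.exp_add, Real.exp_le_exp]
    have h1 : ‖x+w‖ ≤ ‖x‖ + ρ := le_trans (norm_add_le x w) (by linarith)
    have h2 : ‖x+w‖^2 ≤ (‖x‖ + ρ)^2 := by
      have := norm_nonneg (x+w)
      nlinarith
    have hx2 : ‖x+w‖^2 ≤ 4*‖x‖^2 + 2*ρ^2 := by
      nlinarith [sq_nonneg (‖x‖ - ρ), sq_nonneg ‖x‖]
    have h16 : (4*(2*ρ)^2) = 16*ρ^2 := by ring
    rw [h16]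
    have hdiv : ‖x+w‖^2/(16*ρ^2) ≤ 1/8 + ‖x‖^2/(4*ρ^2) := by
      rw [div_le_iff₀ (by positivity)]
      have h' : (1/8 + ‖x‖^2/(4*ρ^2))*(16*ρ^2) = 2*ρ^2 + 4*‖x‖^2 := by
        field_simp; ring
      rw [h']; linarith
    have e1 : -‖x+w‖^2/(16*ρ^2) = -(‖x+w‖^2/(16*ρ^2)) := by ring
    have e2 : -‖x‖^2/(4*ρ^2) = -(‖x‖^2/(4*ρ^2)) := by ring
    rw [e1, e2]; linarith
  have hpos : (0:ℝ) ≤ (4:ℝ) ^ (-(N:ℝ)/2) * (4 * Real.pi * ρ^2) ^ (-(N:ℝ)/2) := by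
    positivity
  calc (4:ℝ) ^ (-(N:ℝ)/2) * Real.exp (-(1/8)) *
        ((4 * Real.pi * ρ^2) ^ (-(N:ℝ)/2) * Real.exp (-‖x‖^2/(4*ρ^2)))
      = ((4:ℝ) ^ (-(N:ℝ)/2) * (4 * Real.pi * ρ^2) ^ (-(N:ℝ)/2)) *
        (Real.exp (-(1/8)) * Real.exp (-‖x‖^2/(4*ρ^2))) := by ring
    _ ≤ ((4:ℝ) ^ (-(N:ℝ)/2) * (4 * Real.pi * ρ^2) ^ (-(N:ℝ)/2)) *
        Real.exp (-‖x+w‖^2/(4*(2*ρ)^2)) := mul_le_mul_of_nonneg_left hexp hpos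
    _ = _ := by ring

/-- Lemma 3.1, case θ = 2. There is `c_* > 0` depending only on `N` such
that every solution `u` of the Hardy parabolic equation with initial data `μ` on
`ℝ^N × [0,T)` satisfies `u(x+z, (2ρ)²) ≥ c_* G(x, ρ²) μ(B(z,ρ))` for a.e. `x`, whenever
`(2ρ)² < T`. -/
theorem statement10 (N : ℕ) (hN : 1 ≤ N) :
    ∃ cstar : ℝ, 0 < cstar ∧
      ∀ p γ : ℝ, 1 < p → 0 < γ → γ < 2 → γ < N →
      ∀ T : ℝ, 0 < T →
      ∀ μ : Measure (EuclideanSpace ℝ (Fin N)), IsLocallyFiniteMeasure μ →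
      ∀ u : EuclideanSpace ℝ (Fin N) → ℝ → ℝ, IsSolution N p γ μ T u →
      ∀ (z : EuclideanSpace ℝ (Fin N)) (ρ : ℝ), 0 < ρ → (2 * ρ) ^ 2 < T →
        ∀ᵐ x ∂(volume : Measure (EuclideanSpace ℝ (Fin N))),
          ENNReal.ofReal (cstar * G N x (ρ ^ 2)) * μ (Metric.ball z ρ)
            ≤ ENNReal.ofReal (u (x + z) ((2 * ρ) ^ 2)) := by
  refine ⟨(4:ℝ) ^ (-(N:ℝ)/2) * Real.exp (-(1/8)), by positivity, ?_⟩
  intro p γ hp hγ0 hγ2 hγN T hT μ hμ u hu z ρ hρ hρT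
  obtain ⟨humeas, hunn, hae⟩ := hu
  have hmp : MeasurePreserving (fun x : EuclideanSpace ℝ (Fin N) => x + z) volume volume :=
    measurePreserving_add_right volume z
  have hae' := hmp.quasiMeasurePreserving.ae hae
  filter_upwards [hae'] with x hx
  have ht0 : (0:ℝ) < (2*ρ)^2 := by positivity
  obtain ⟨hfin, heqn⟩ := hx ((2*ρ)^2) ht0 hρT
  rw [heqn]
  unfold hardyRHS
  have hGm : Measurable fun y : EuclideanSpace ℝ (Fin N) =>
      ENNReal.ofReal (G N (x + z - y) ((2*ρ)^2)) := by
    apply ENNReal.measurable_ofReal.comp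
    unfold G
    fun_prop
  calc ENNReal.ofReal ((4:ℝ)^(-(N:ℝ)/2) * Real.exp (-(1/8)) * G N x (ρ^2)) * μ (Metric.ball z ρ)
      = ∫⁻ _ in Metric.ball z ρ,
          ENNReal.ofReal ((4:ℝ)^(-(N:ℝ)/2) * Real.exp (-(1/8)) * G N x (ρ^2)) ∂μ :=
        (setLIntegral_const _ _).symm
    _ ≤ ∫⁻ y in Metric.ball z ρ, ENNReal.ofReal (G N (x + z - y) ((2*ρ)^2)) ∂μ := by
        refine setLIntegral_mono hGm fun y hy => ?_
        refine ENNReal.ofReal_le_ofReal ?_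
        have hw : ‖z - y‖ ≤ ρ := by
          have : dist y z < ρ := Metric.mem_ball.1 hy
          rw [dist_eq_norm] at this
          rw [norm_sub_rev]
          exact this.le
        have h := key N hρ x (z - y) hw
        simpa [add_sub_assoc] using h
    _ ≤ ∫⁻ y, ENNReal.ofReal (G N (x + z - y) ((2*ρ)^2)) ∂μ := setLIntegral_le_lintegral _ _
    _ ≤ _ := le_self_add
end

section
/- Let N ≥ 1, 0 < γ < min{2, N}, p = p₀ := 1 + 2/N and 0 < T < ∞. There exists a constant C > 0, depending only on N and γ, with the following property: if z ∈ ℝ^N satisfies |z| > T^{1/2} and ρ > 0 satisfies ρ² < T/3, then for every s with ρ² < s < T/3, one has ∫_{ℝ^N} G(y,s) |y + z|^{γ/(p−1)} dy ≤ C ρ^{−N} ∫_{B(z,ρ)} |y|^{γ/(p−1)} dy. -/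
open MeasureTheory Real
open scoped ENNReal NNReal

lemma integrable_gauss (N : ℕ) {b : ℝ} (hb : 0 < b) :
    Integrable (fun v : EuclideanSpace ℝ (Fin N) => Real.exp (-b * ‖v‖ ^ 2)) := by
  have h := (GaussianFourier.integrable_cexp_neg_mul_sq_norm_add (b := (b : ℂ))
    (by simpa using hb) 0 (0 : EuclideanSpace ℝ (Fin N))).norm
  simpa [Complex.norm_exp, ← Complex.ofReal_pow] using h

lemma rpow_half_sq {x α : ℝ} (hx : 0 ≤ x) : (x ^ 2) ^ (α / 2) = x ^ α := by
  rw [← Real.rpow_natCast x 2, ← Real.rpow_mul hx]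
  congr 1
  push_cast
  ring

set_option maxHeartbeats 1000000 in
/-- Lemma 4.1, case θ = 2, p = p₀ = 1 + 2/N. If `|z| > √T` and
`ρ² < s < T/3`, then `∫ G(y,s) |y+z|^{γ/(p-1)} dy ≤ C ρ^{-N} ∫_{B(z,ρ)} |y|^{γ/(p-1)} dy`
with `C` depending only on `N` and `γ`. -/
theorem statement11 (N : ℕ) (hN : 1 ≤ N) (γ : ℝ)
    (hγ0 : 0 < γ) (hγ2 : γ < 2) (hγN : γ < N) (p : ℝ) (hp : p = 1 + 2 / N) :
    ∃ C : ℝ, 0 < C ∧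
      ∀ T : ℝ, 0 < T →
      ∀ z : EuclideanSpace ℝ (Fin N), Real.sqrt T < ‖z‖ →
      ∀ ρ : ℝ, 0 < ρ → ρ ^ 2 < T / 3 →
      ∀ s : ℝ, ρ ^ 2 < s → s < T / 3 →
        (∫⁻ y, ENNReal.ofReal (G N y s * ‖y + z‖ ^ (γ / (p - 1))))
          ≤ ENNReal.ofReal (C * ρ ^ (-(N : ℝ))) *
              ∫⁻ y in Metric.ball z ρ, ENNReal.ofReal (‖y‖ ^ (γ / (p - 1))) := by
  have hN0 : (0:ℝ) < N := by exact_mod_cast hN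
  set α : ℝ := γ / (p - 1) with hαdef
  have hp1 : p - 1 = 2 / N := by rw [hp]; ring
  have hα : α = γ * N / 2 := by
    rw [hαdef, hp1]
    field_simp
  have hα0 : 0 < α := by rw [hα]; positivity
  have hα2N : α / 2 ≤ (N : ℝ) := by
    have h := mul_le_mul_of_nonneg_right hγ2.le hN0.le
    rw [hα]; linarith
  -- constants
  set Q : ℝ := 8 ^ N * (N.factorial : ℝ) with hQ
  have hQ0 : (0:ℝ) < Q := by rw [hQ]; positivity
  set D : ℝ := 2 + Q with hD
  have hD1 : (1:ℝ) ≤ D := by rw [hD]; linarith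
  have h2α : (0:ℝ) < 2 ^ α := Real.rpow_pos_of_pos two_pos α
  set K : ℝ := 2 ^ α * D with hK
  have hKpos : 0 < K := by rw [hK]; exact mul_pos h2α (by linarith)
  have h2N : (0:ℝ) < 2 ^ ((N:ℝ)/2) := Real.rpow_pos_of_pos two_pos _
  set K2 : ℝ := K * 2 ^ ((N : ℝ) / 2) with hK2
  have hK2pos : 0 < K2 := by rw [hK2]; exact mul_pos hKpos h2N
  set c1 : ℝ := 1 - (Real.sqrt 3)⁻¹ with hc1
  have h3 : 1 < Real.sqrt 3 := by
    have : Real.sqrt 1 < Real.sqrt 3 := Real.sqrt_lt_sqrt (by norm_num) (by norm_num)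
    simpa using this
  have hc1pos : 0 < c1 := by
    have h1 : (Real.sqrt 3)⁻¹ < 1 := inv_lt_one_of_one_lt₀ h3
    rw [hc1]; linarith
  set v : ℝ := (volume (Metric.ball (0 : EuclideanSpace ℝ (Fin N)) 1)).toReal with hv
  have hball_ne : volume (Metric.ball (0 : EuclideanSpace ℝ (Fin N)) 1) ≠ ⊤ :=
    measure_ball_lt_top.ne
  have hvpos : 0 < v := by
    rw [hv]
    exact ENNReal.toReal_pos (Metric.measure_ball_pos volume 0 one_pos).ne' hball_ne
  have hc1α : (0:ℝ) < c1 ^ α := Real.rpow_pos_of_pos hc1pos α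
  refine ⟨K2 / (c1 ^ α * v), div_pos hK2pos (mul_pos hc1α hvpos), ?_⟩
  intro T hT z hz ρ hρ hρT s hρs hsT
  set C : ℝ := K2 / (c1 ^ α * v) with hC
  have hCpos : 0 < C := div_pos hK2pos (mul_pos hc1α hvpos)
  have hs0 : 0 < s := lt_trans (by positivity) hρs
  have hz0 : 0 < ‖z‖ := lt_of_le_of_lt (Real.sqrt_nonneg T) hz
  have hTz : T < ‖z‖ ^ 2 := by
    have h1 : Real.sqrt T ^ 2 < ‖z‖ ^ 2 :=
      pow_lt_pow_left₀ hz (Real.sqrt_nonneg T) two_ne_zero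
    rwa [Real.sq_sqrt hT.le] at h1
  have hsz : s ≤ ‖z‖ ^ 2 := by linarith
  set b : ℝ := (8 * s)⁻¹ with hb
  have hb0 : 0 < b := by rw [hb]; positivity
  set A : ℝ := (4 * π * s) ^ (-(N:ℝ) / 2) with hA
  have hA0 : 0 < A := Real.rpow_pos_of_pos (by positivity) _
  have hzα : (0:ℝ) ≤ ‖z‖ ^ α := Real.rpow_nonneg (norm_nonneg _) _
  -- pointwise bound
  have hpw : ∀ y : EuclideanSpace ℝ (Fin N),
      G N y s * ‖y + z‖ ^ α ≤ K * ‖z‖ ^ α * A * Real.exp (-b * ‖y‖ ^ 2) := by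
    intro y
    set t : ℝ := ‖y‖ ^ 2 / (8 * s) with ht
    have ht0 : 0 ≤ t := by positivity
    have hy2 : ‖y‖ ^ 2 = 8 * t * s := by rw [ht]; field_simp
    have hexpb : -b * ‖y‖ ^ 2 = -t := by rw [hb, ht]; field_simp
    have hexp2 : Real.exp (-‖y‖ ^ 2 / (4 * s)) = Real.exp (-t) * Real.exp (-t) := by
      rw [← Real.exp_add]
      congr 1
      rw [hy2]
      field_simp
      ring
    set e : ℝ := Real.exp (-t) with he
    have he0 : 0 < e := Real.exp_pos _
    have he1 : e ≤ 1 := by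
      rw [he, ← Real.exp_zero]
      exact Real.exp_le_exp.mpr (by linarith)
    set Y : ℝ := ‖y‖ ^ α with hY
    set Z : ℝ := ‖z‖ ^ α with hZ
    have hY0 : 0 ≤ Y := Real.rpow_nonneg (norm_nonneg _) _
    have hZ0 : 0 ≤ Z := Real.rpow_nonneg (norm_nonneg _) _
    have hYe : Y * e ≤ (D - 1) * Z := by
      have hYfac : Y = (8 * t) ^ (α / 2) * s ^ (α / 2) := by
        rw [hY, ← rpow_half_sq (norm_nonneg y), hy2,
          ← Real.mul_rpow (by positivity) hs0.le]
      have h8t : (8 * t) ^ (α / 2) ≤ 1 + Q * Real.exp t := by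
        rcases le_total (8 * t) 1 with h | h
        · have h1 : (8 * t) ^ (α / 2) ≤ 1 :=
            Real.rpow_le_one (by positivity) h (by positivity)
          have h2 : (0:ℝ) ≤ Q * Real.exp t := mul_nonneg hQ0.le (Real.exp_pos t).le
          linarith
        · have h1 : (8 * t) ^ (α / 2) ≤ (8 * t) ^ ((N:ℝ)) :=
            Real.rpow_le_rpow_of_exponent_le h hα2N
          have h2 : (8 * t) ^ ((N:ℝ)) = 8 ^ N * t ^ N := by
            rw [Real.rpow_natCast, mul_pow]
          have h3 : t ^ N ≤ (N.factorial : ℝ) * Real.exp t := by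
            have h4 := Real.pow_div_factorial_le_exp (x := t) ht0 N
            have h5 : (0:ℝ) < (N.factorial : ℝ) := by positivity
            rw [div_le_iff₀ h5] at h4
            linarith [h4]
          have h6 : (0:ℝ) ≤ (8:ℝ) ^ N := by positivity
          have h7 : (8:ℝ) ^ N * t ^ N ≤ 8 ^ N * ((N.factorial : ℝ) * Real.exp t) :=
            mul_le_mul_of_nonneg_left h3 h6
          have h8 : (8:ℝ) ^ N * ((N.factorial : ℝ) * Real.exp t) = Q * Real.exp t := by
            rw [hQ]; ring
          linarith
      have hse : (8 * t) ^ (α / 2) * e ≤ D - 1 := by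
        have h1 : (8 * t) ^ (α / 2) * e ≤ (1 + Q * Real.exp t) * e :=
          mul_le_mul_of_nonneg_right h8t he0.le
        have h2 : Real.exp t * e = 1 := by
          rw [he, ← Real.exp_add]; simp
        have h4 : (1 + Q * Real.exp t) * e = e + Q * (Real.exp t * e) := by ring
        rw [h2, mul_one] at h4
        rw [hD]
        linarith
      have hsZ : s ^ (α / 2) ≤ Z := by
        rw [hZ, ← rpow_half_sq (norm_nonneg z)]
        exact Real.rpow_le_rpow hs0.le hsz (by positivity)
      have hs2' : (0:ℝ) ≤ s ^ (α / 2) := Real.rpow_nonneg hs0.le _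
      have hD1' : (0:ℝ) ≤ D - 1 := by linarith
      calc Y * e = ((8 * t) ^ (α / 2) * e) * s ^ (α / 2) := by rw [hYfac]; ring
        _ ≤ (D - 1) * Z := mul_le_mul hse hsZ hs2' hD1'
    have hW : ‖y + z‖ ^ α ≤ 2 ^ α * (Y + Z) := by
      have h1 : ‖y + z‖ ^ α ≤ (‖y‖ + ‖z‖) ^ α :=
        Real.rpow_le_rpow (norm_nonneg _) (norm_add_le y z) hα0.le
      rcases le_total ‖y‖ ‖z‖ with h | h
      · have h2 : (‖y‖ + ‖z‖) ^ α ≤ (2 * ‖z‖) ^ α :=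
          Real.rpow_le_rpow (by positivity) (by linarith) hα0.le
        have h3 : (2 * ‖z‖) ^ α = 2 ^ α * Z := by
          rw [hZ, Real.mul_rpow (by norm_num) (norm_nonneg _)]
        have h4 : (0:ℝ) ≤ 2 ^ α * Y := mul_nonneg h2α.le hY0
        linarith
      · have h2 : (‖y‖ + ‖z‖) ^ α ≤ (2 * ‖y‖) ^ α :=
          Real.rpow_le_rpow (by positivity) (by linarith) hα0.le
        have h3 : (2 * ‖y‖) ^ α = 2 ^ α * Y := by
          rw [hY, Real.mul_rpow (by norm_num) (norm_nonneg _)]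
        have h4 : (0:ℝ) ≤ 2 ^ α * Z := mul_nonneg h2α.le hZ0
        linarith
    have hkey : e * ‖y + z‖ ^ α ≤ K * Z := by
      have h1 : e * ‖y + z‖ ^ α ≤ e * (2 ^ α * (Y + Z)) :=
        mul_le_mul_of_nonneg_left hW he0.le
      have h2 : e * (2 ^ α * (Y + Z)) = 2 ^ α * (Y * e + Z * e) := by ring
      have h3 : Z * e ≤ Z * 1 := mul_le_mul_of_nonneg_left he1 hZ0
      rw [mul_one] at h3
      have h4 : Y * e + Z * e ≤ (D - 1) * Z + Z := by linarith
      have h5 : 2 ^ α * (Y * e + Z * e) ≤ 2 ^ α * ((D - 1) * Z + Z) :=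
        mul_le_mul_of_nonneg_left h4 h2α.le
      have h6 : 2 ^ α * ((D - 1) * Z + Z) = K * Z := by rw [hK]; ring
      linarith
    have hG : G N y s = A * (e * e) := by
      simp only [G, ← hA, hexp2]
    rw [hG, hexpb, ← he]
    linarith [mul_le_mul_of_nonneg_left hkey (mul_nonneg hA0.le he0.le)]
  -- lintegral upper bound
  have hInt : Integrable (fun y : EuclideanSpace ℝ (Fin N) =>
      K * ‖z‖ ^ α * A * Real.exp (-b * ‖y‖ ^ 2)) := (integrable_gauss N hb0).const_mul _
  have hLHS : (∫⁻ y, ENNReal.ofReal (G N y s * ‖y + z‖ ^ α))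
      ≤ ENNReal.ofReal (K2 * ‖z‖ ^ α) := by
    have h1 : (∫⁻ y, ENNReal.ofReal (G N y s * ‖y + z‖ ^ α))
        ≤ ∫⁻ y, ENNReal.ofReal (K * ‖z‖ ^ α * A * Real.exp (-b * ‖y‖ ^ 2)) :=
      lintegral_mono fun y => ENNReal.ofReal_le_ofReal (hpw y)
    have h2 : (∫⁻ y, ENNReal.ofReal (K * ‖z‖ ^ α * A * Real.exp (-b * ‖y‖ ^ 2)))
        = ENNReal.ofReal (∫ y : EuclideanSpace ℝ (Fin N),
            K * ‖z‖ ^ α * A * Real.exp (-b * ‖y‖ ^ 2)) :=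
      (ofReal_integral_eq_lintegral_ofReal hInt
        (Filter.Eventually.of_forall fun y =>
          mul_nonneg (mul_nonneg (mul_nonneg hKpos.le hzα) hA0.le) (Real.exp_pos _).le)).symm
    have h3 : (∫ y : EuclideanSpace ℝ (Fin N), K * ‖z‖ ^ α * A * Real.exp (-b * ‖y‖ ^ 2))
        = K * ‖z‖ ^ α * A * ((π / b) ^ ((N:ℝ) / 2)) := by
      rw [MeasureTheory.integral_const_mul,
        GaussianFourier.integral_rexp_neg_mul_sq_norm hb0, finrank_euclideanSpace_fin]
    have hπb : π / b = 2 * (4 * π * s) := by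
      rw [hb]
      field_simp
      ring
    have h5 : A * ((4 * π * s) ^ ((N:ℝ) / 2)) = 1 := by
      rw [hA, ← Real.rpow_add (by positivity),
        show (-(N:ℝ) / 2 + (N:ℝ) / 2) = 0 by ring, Real.rpow_zero]
    have h4 : K * ‖z‖ ^ α * A * ((π / b) ^ ((N:ℝ) / 2)) = K2 * ‖z‖ ^ α := by
      calc K * ‖z‖ ^ α * A * ((π / b) ^ ((N:ℝ) / 2))
          = K * ‖z‖ ^ α * A * ((2 * (4 * π * s)) ^ ((N:ℝ) / 2)) := by rw [hπb]
        _ = K * ‖z‖ ^ α * (2 ^ ((N:ℝ) / 2)) * (A * (4 * π * s) ^ ((N:ℝ) / 2)) := by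
            rw [Real.mul_rpow (by norm_num) (by positivity)]
            ring
        _ = K2 * ‖z‖ ^ α := by rw [h5, hK2]; ring
    rw [h2, h3, h4] at h1
    exact h1
  -- ball volume and lower bound for RHS
  haveI : Nontrivial (EuclideanSpace ℝ (Fin N)) :=
    Module.nontrivial_of_finrank_pos (R := ℝ)
      (by rw [finrank_euclideanSpace_fin]; exact hN)
  have hEball : volume (Metric.ball z ρ) = ENNReal.ofReal (ρ ^ N) * ENNReal.ofReal v := by
    rw [Measure.addHaar_ball volume z hρ.le, finrank_euclideanSpace_fin, hv,
      ENNReal.ofReal_toReal hball_ne]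
  have hρz : ρ ≤ (Real.sqrt 3)⁻¹ * ‖z‖ := by
    have hsq : ((Real.sqrt 3)⁻¹ * ‖z‖) ^ 2 = ‖z‖ ^ 2 / 3 := by
      rw [mul_pow, inv_pow, Real.sq_sqrt (by norm_num : (0:ℝ) ≤ 3)]
      ring
    have h1 : ρ ^ 2 < ((Real.sqrt 3)⁻¹ * ‖z‖) ^ 2 := by rw [hsq]; linarith
    have h2 := lt_of_pow_lt_pow_left₀ 2 (by positivity) h1
    linarith
  have hlow : ENNReal.ofReal ((c1 * ‖z‖) ^ α) * volume (Metric.ball z ρ)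
      ≤ ∫⁻ y in Metric.ball z ρ, ENNReal.ofReal (‖y‖ ^ α) := by
    rw [← setLIntegral_const]
    refine setLIntegral_mono' measurableSet_ball fun y hy => ?_
    refine ENNReal.ofReal_le_ofReal (Real.rpow_le_rpow (by positivity) ?_ hα0.le)
    have hy' : ‖y - z‖ < ρ := by
      rw [← dist_eq_norm]
      exact Metric.mem_ball.mp hy
    have h1 : ‖z‖ - ‖y‖ ≤ ‖y - z‖ := by
      have h2 := norm_sub_norm_le z y
      rwa [norm_sub_rev] at h2
    have h3 : c1 * ‖z‖ = ‖z‖ - (Real.sqrt 3)⁻¹ * ‖z‖ := by rw [hc1]; ring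
    calc c1 * ‖z‖ = ‖z‖ - (Real.sqrt 3)⁻¹ * ‖z‖ := h3
      _ ≤ ‖z‖ - ρ := by linarith only [hρz]
      _ ≤ ‖z‖ - ‖y - z‖ := by linarith only [hy']
      _ ≤ ‖y‖ := by linarith only [h1]
  -- final assembly
  have hfinal : ENNReal.ofReal (K2 * ‖z‖ ^ α)
      = ENNReal.ofReal (C * ρ ^ (-(N:ℝ))) *
        (ENNReal.ofReal ((c1 * ‖z‖) ^ α) * volume (Metric.ball z ρ)) := by
    rw [hEball,
      ← ENNReal.ofReal_mul (by positivity : (0:ℝ) ≤ (ρ:ℝ) ^ N),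
      ← ENNReal.ofReal_mul (Real.rpow_nonneg (mul_nonneg hc1pos.le (norm_nonneg z)) α),
      ← ENNReal.ofReal_mul (mul_nonneg hCpos.le (Real.rpow_nonneg hρ.le _))]
    congr 1
    have h1 : ρ ^ (-(N:ℝ)) * (ρ:ℝ) ^ N = 1 := by
      rw [← Real.rpow_natCast ρ N, ← Real.rpow_add hρ]
      norm_num
    have h2 : (c1 * ‖z‖) ^ α = c1 ^ α * ‖z‖ ^ α := Real.mul_rpow hc1pos.le (norm_nonneg _)
    have h3 : C * (c1 ^ α * v) = K2 := by
      rw [hC, div_mul_cancel₀]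
      exact (mul_pos hc1α hvpos).ne'
    calc K2 * ‖z‖ ^ α = (C * (c1 ^ α * v)) * ‖z‖ ^ α * (ρ ^ (-(N:ℝ)) * (ρ:ℝ) ^ N) := by
          rw [h3, h1]; ring
      _ = C * ρ ^ (-(N:ℝ)) * (c1 ^ α * ‖z‖ ^ α * ((ρ:ℝ) ^ N * v)) := by ring
      _ = C * ρ ^ (-(N:ℝ)) * ((c1 * ‖z‖) ^ α * ((ρ:ℝ) ^ N * v)) := by rw [h2]
  calc (∫⁻ y, ENNReal.ofReal (G N y s * ‖y + z‖ ^ α)) ≤ ENNReal.ofReal (K2 * ‖z‖ ^ α) := hLHS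
    _ = ENNReal.ofReal (C * ρ ^ (-(N:ℝ))) *
        (ENNReal.ofReal ((c1 * ‖z‖) ^ α) * volume (Metric.ball z ρ)) := hfinal
    _ ≤ ENNReal.ofReal (C * ρ ^ (-(N:ℝ))) *
        ∫⁻ y in Metric.ball z ρ, ENNReal.ofReal (‖y‖ ^ α) := mul_le_mul_right hlow _
end

section
/- Let p > 1 and c₁, c₂ > 0. Define the sequence (a_k)_{k ≥ 1} by a₁ := c₁ and a_{k+1} := c₂ a_k^p (p−1)/(p^k − 1) for k = 1, 2, …. Then there exists a constant β > 0 such that a_k ≥ β^{p^k} for all k = 1, 2, …. -/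
open Real

noncomputable def sig16 (p q : ℝ) : ℕ → ℝ
  | 0 => 1
  | (j+1) => p * sig16 p q j + q ^ (j+1)

/-- inequality (3.19). Let `p > 1`, `c₁, c₂ > 0` and define
`a₁ = c₁`, `a_{k+1} = c₂ a_k^p (p-1)/(p^k - 1)`. Then there is `β > 0` with
`a_k ≥ β^{p^k}` for all `k ≥ 1`. -/
theorem statement16 (p c₁ c₂ : ℝ) (hp : 1 < p) (hc₁ : 0 < c₁) (hc₂ : 0 < c₂)
    (a : ℕ → ℝ) (ha1 : a 1 = c₁)
    (harec : ∀ k : ℕ, 1 ≤ k → a (k + 1) = c₂ * a k ^ p * (p - 1) / (p ^ k - 1)) :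
    ∃ β : ℝ, 0 < β ∧ ∀ k : ℕ, 1 ≤ k → β ^ (p ^ k) ≤ a k := by
  have hp0 : (0:ℝ) < p := by linarith
  set q : ℝ := (p + 1) / 2 with hqdef
  have hq1 : 1 < q := by show (1:ℝ) < (p+1)/2; linarith
  have hq0 : 0 < q := by linarith
  have hqp : q < p := by show (p+1)/2 < p; linarith
  have hq10 : 0 < q - 1 := by linarith
  set N : ℝ := 1 / (p - q) with hNdef
  have hpq0 : 0 < p - q := by linarith
  have hN0 : 0 < N := by positivity
  have hN : N * (p - q) = 1 := by rw [hNdef]; field_simp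
  have hc : 0 < c₂ * (p - 1) := by nlinarith
  set r : ℝ := p⁻¹ ^ (1 / (q - 1)) with hrdef
  have hr : 0 < r := rpow_pos_of_pos (inv_pos.2 hp0) _
  set β : ℝ := min c₁ (min 1 (min (c₂ * (p - 1)) r)) with hβdef
  have hβ0 : 0 < β := lt_min hc₁ (lt_min one_pos (lt_min hc hr))
  have hβ1 : β ≤ 1 := le_trans (min_le_right _ _) (min_le_left _ _)
  have hβc₁ : β ≤ c₁ := min_le_left _ _
  have hβc : β ≤ c₂ * (p - 1) :=
    le_trans (min_le_right _ _) (le_trans (min_le_right _ _) (min_le_left _ _))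
  have hβr : β ≤ r :=
    le_trans (min_le_right _ _) (le_trans (min_le_right _ _) (min_le_right _ _))
  have hβq : β ^ (q - 1) ≤ p⁻¹ := by
    calc β ^ (q - 1) ≤ r ^ (q - 1) := Real.rpow_le_rpow hβ0.le hβr hq10.le
      _ = p⁻¹ := by
          rw [hrdef, ← Real.rpow_mul (inv_nonneg.2 hp0.le), one_div,
            inv_mul_cancel₀ (ne_of_gt hq10), Real.rpow_one]
  -- key inequality on β powers
  have key2 : ∀ j : ℕ, β ^ (q ^ (j+1) : ℝ) ≤ c₂ * (p - 1) / (p ^ (j+1) - 1) := by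
    intro j
    have hpk1 : (0:ℝ) < p ^ (j+1) - 1 := sub_pos.2 (one_lt_pow₀ hp (Nat.succ_ne_zero j))
    have hpk : (0:ℝ) < p ^ (j+1) := pow_pos hp0 _
    have hbern : (1 : ℝ) + (j+1 : ℕ) * (q - 1) ≤ q ^ (j+1) := by
      have := one_add_mul_le_pow (by linarith : (-2:ℝ) ≤ q - 1) (j+1)
      have hq' : 1 + (q - 1) = q := by ring
      rwa [hq'] at this
    calc β ^ (q ^ (j+1) : ℝ)
        ≤ β ^ ((1:ℝ) + (j+1 : ℕ) * (q - 1)) :=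
          Real.rpow_le_rpow_of_exponent_ge hβ0 hβ1 hbern
      _ = β * (β ^ (q - 1)) ^ (j+1) := by
          rw [Real.rpow_add hβ0, Real.rpow_one, mul_comm ((j+1 : ℕ) : ℝ),
            Real.rpow_mul hβ0.le, Real.rpow_natCast]
      _ ≤ (c₂ * (p - 1)) * (p⁻¹) ^ (j+1) := by
          apply mul_le_mul hβc (pow_le_pow_left₀ (Real.rpow_nonneg hβ0.le _) hβq _)
            (pow_nonneg (Real.rpow_nonneg hβ0.le _) _) hc.le
      _ = c₂ * (p - 1) / p ^ (j+1) := by rw [inv_pow]; ring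
      _ ≤ c₂ * (p - 1) / (p ^ (j+1) - 1) := by
          apply div_le_div_of_nonneg_left hc.le hpk1 (by linarith)
  -- main induction
  have key : ∀ j : ℕ, β ^ (sig16 p q j) ≤ a (j+1) := by
    intro j
    induction j with
    | zero =>
        have : sig16 p q 0 = 1 := rfl
        rw [this, Real.rpow_one, ha1]; exact hβc₁
    | succ j ih =>
        rw [harec (j+1) (by omega)]
        have hβs : (0:ℝ) < β ^ sig16 p q j := rpow_pos_of_pos hβ0 _
        have hpk1 : (0:ℝ) < p ^ (j+1) - 1 := sub_pos.2 (one_lt_pow₀ hp (Nat.succ_ne_zero j))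
        calc β ^ sig16 p q (j+1)
            = β ^ (p * sig16 p q j) * β ^ (q ^ (j+1) : ℝ) := by
              show β ^ (p * sig16 p q j + q ^ (j+1)) = _
              rw [Real.rpow_add hβ0]
          _ ≤ β ^ (p * sig16 p q j) * (c₂ * (p - 1) / (p ^ (j+1) - 1)) := by
              exact mul_le_mul_of_nonneg_left (key2 j) (Real.rpow_nonneg hβ0.le _)
          _ = c₂ * (β ^ sig16 p q j) ^ p * (p - 1) / (p ^ (j+1) - 1) := by
              rw [mul_comm p (sig16 p q j), Real.rpow_mul hβ0.le]; ring
          _ ≤ c₂ * a (j+1) ^ p * (p - 1) / (p ^ (j+1) - 1) := by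
              have h1 : (β ^ sig16 p q j) ^ p ≤ a (j+1) ^ p :=
                Real.rpow_le_rpow hβs.le ih hp0.le
              gcongr <;> linarith
  -- bound on sig16
  have hsig : ∀ j : ℕ, sig16 p q j ≤ N * (p ^ (j+1) - q ^ (j+1)) := by
    intro j
    induction j with
    | zero =>
        have : sig16 p q 0 = 1 := rfl
        rw [this]
        simp only [zero_add, pow_one]
        linarith [hN]
    | succ j ih =>
        show p * sig16 p q j + q ^ (j+1) ≤ N * (p ^ (j+2) - q ^ (j+2))
        have e1 : (p : ℝ) ^ (j+2) = p * p ^ (j+1) := by ring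
        have e2 : (q : ℝ) ^ (j+2) = q * q ^ (j+1) := by ring
        have hqk : (0:ℝ) < q ^ (j+1) := pow_pos hq0 _
        have h3 : p * sig16 p q j ≤ p * (N * (p ^ (j+1) - q ^ (j+1))) :=
          mul_le_mul_of_nonneg_left ih hp0.le
        rw [e1, e2]
        nlinarith [hN, hqk]
  refine ⟨β ^ N, rpow_pos_of_pos hβ0 N, ?_⟩
  intro k hk
  obtain ⟨j, rfl⟩ : ∃ j, k = j + 1 := ⟨k - 1, by omega⟩
  have hsig' : sig16 p q j ≤ N * p ^ (j+1) := by
    have hqk : (0:ℝ) < q ^ (j+1) := pow_pos hq0 _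
    nlinarith [hsig j]
  calc (β ^ N) ^ (p ^ (j+1)) = β ^ (N * p ^ (j+1)) := by
        rw [← Real.rpow_mul hβ0.le]
    _ ≤ β ^ (sig16 p q j) := Real.rpow_le_rpow_of_exponent_ge hβ0 hβ1 hsig'
    _ ≤ a (j+1) := key j
end

section
/- Let N ≥ 1, 0 < γ < min{2, N}, p = p_γ := 1 + (2−γ)/N, and c₁, c₂ > 0. Then there exists a constant K > 0, depending only on N, γ, c₁ and c₂, with the following property: if M ≥ 0, ρ > 0 and T > 0 satisfy 5ρ² < T, and w : (ρ², T) → [0, ∞] is a measurable function with w(t) < ∞ for almost every t ∈ (ρ², T) and w(t) ≥ c₁ M t^{−N/2} + c₂ t^{−N/2} ∫_{ρ²}^{t} s^{(N−γ)/2} w(s)^p ds for almost every t ∈ (ρ², T), then M ≤ K [log(T/(5ρ²))]^{−1/(p−1)}. -/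
open MeasureTheory Real Set
open scoped ENNReal NNReal

lemma lint_inv {a b : ℝ} (ha : 0 < a) (hab : a ≤ b) :
    ∫⁻ s in Set.Ioo a b, ENNReal.ofReal s⁻¹ = ENNReal.ofReal (Real.log (b / a)) := by
  have hco : ContinuousOn (fun s : ℝ => s⁻¹) (Set.Icc a b) := by
    apply ContinuousOn.inv₀ continuousOn_id
    intro x hx; exact ne_of_gt (lt_of_lt_of_le ha hx.1)
  have hint : IntegrableOn (fun s : ℝ => s⁻¹) (Set.Ioo a b) :=
    (hco.integrableOn_compact isCompact_Icc).mono_set Ioo_subset_Icc_self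
  rw [← ofReal_integral_eq_lintegral_ofReal hint]
  · congr 1
    rw [← integral_Ioc_eq_integral_Ioo, ← intervalIntegral.integral_of_le hab]
    exact integral_inv_of_pos ha (lt_of_lt_of_le ha hab)
  · filter_upwards [ae_restrict_mem measurableSet_Ioo] with x hx
    exact le_of_lt (inv_pos.mpr (lt_trans ha hx.1))

lemma pt_alg {s c e f p : ℝ} (hs : 0 < s) (hc : 0 < c) (hef : e + f * p = -1) :
    ENNReal.ofReal (s ^ e) * (ENNReal.ofReal (c * s ^ f)) ^ p
      = ENNReal.ofReal (c ^ p) * ENNReal.ofReal s⁻¹ := by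
  rw [ENNReal.ofReal_rpow_of_pos (by positivity), ← ENNReal.ofReal_mul (by positivity),
    ← ENNReal.ofReal_mul (by positivity)]
  congr 1
  rw [Real.mul_rpow hc.le (by positivity), ← Real.rpow_mul hs.le,
    show s ^ e * (c ^ p * s ^ (f * p)) = c ^ p * (s ^ e * s ^ (f * p)) by ring,
    ← Real.rpow_add hs, hef, Real.rpow_neg_one]

lemma step_low {q p fexp c : ℝ} (hp : 0 ≤ p) (hc : 0 < c) (hef : q + fexp * p = -1)
    (w : ℝ → ℝ≥0∞) (G : ℝ≥0∞) (hG : G ≠ ⊤) {t t' : ℝ} (ht : 0 < t) (htt : t ≤ t')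
    (hw : ∀ᵐ s ∂(volume.restrict (Set.Ioo t t')), ENNReal.ofReal (c * s ^ fexp) * G ≤ w s) :
    ENNReal.ofReal (c ^ p * Real.log (t' / t)) * G ^ p
      ≤ ∫⁻ s in Set.Ioo t t', ENNReal.ofReal (s ^ q) * w s ^ p := by
  have h1 : ∫⁻ s in Set.Ioo t t',
        ENNReal.ofReal (s ^ q) * (ENNReal.ofReal (c * s ^ fexp) * G) ^ p
      ≤ ∫⁻ s in Set.Ioo t t', ENNReal.ofReal (s ^ q) * w s ^ p := by
    refine lintegral_mono_ae ?_
    filter_upwards [hw] with s hs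
    exact mul_le_mul_right (ENNReal.rpow_le_rpow hs hp) _
  refine le_trans (le_of_eq ?_) h1
  rw [setLIntegral_congr_fun measurableSet_Ioo
      (g := fun s => (ENNReal.ofReal (c ^ p) * G ^ p) * ENNReal.ofReal s⁻¹) ?_]
  · rw [lintegral_const_mul' _ _
      (ENNReal.mul_ne_top ENNReal.ofReal_ne_top (ENNReal.rpow_ne_top_of_nonneg hp hG)),
      lint_inv ht htt, ENNReal.ofReal_mul (by positivity)]
    ring
  · refine fun s hs => ?_
    beta_reduce
    rw [ENNReal.mul_rpow_of_nonneg _ _ hp, ← mul_assoc, pt_alg (lt_trans ht hs.1) hc hef]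
    ring

lemma alg_final {B L p : ℝ} (hB : 0 < B) (hL : 0 < L) (hp : 1 < p) :
    ((B * (L/2)) ^ (-(p-1)⁻¹) * (L/2)⁻¹) ^ p⁻¹
      = B ^ (-((p-1)*p)⁻¹) * 2 ^ ((p-1)⁻¹) * L ^ (-1/(p-1)) := by
  have hp0 : 0 < p := lt_trans one_pos hp
  have hp1 : 0 < p - 1 := sub_pos.mpr hp
  have hL2 : 0 < L/2 := by positivity
  have hBL : 0 < B * (L/2) := by positivity
  apply Real.log_injOn_pos (Set.mem_Ioi.mpr (by positivity)) (Set.mem_Ioi.mpr (by positivity))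
  rw [Real.log_rpow (by positivity),
    Real.log_mul (ne_of_gt (by positivity)) (ne_of_gt (by positivity)),
    Real.log_rpow hBL, Real.log_mul hB.ne' hL2.ne', Real.log_inv,
    Real.log_div hL.ne' two_ne_zero,
    Real.log_mul (ne_of_gt (by positivity)) (ne_of_gt (by positivity)),
    Real.log_mul (ne_of_gt (by positivity)) (ne_of_gt (by positivity)),
    Real.log_rpow hB, Real.log_rpow two_pos, Real.log_rpow hL]
  field_simp
  ring

set_option maxHeartbeats 1000000 in
/-- the iteration argument in the proof of (1.6), case θ = 2,
p = p_γ = 1 + (2-γ)/N. If `w` satisfies the integral inequality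
`w(t) ≥ c₁ M t^{-N/2} + c₂ t^{-N/2} ∫_{ρ²}^t s^{(N-γ)/2} w(s)^p ds` a.e. on `(ρ², T)`
and is a.e. finite there, then `M ≤ K [log(T/(5ρ²))]^{-1/(p-1)}`. -/
theorem statement17 (N : ℕ) (hN : 1 ≤ N) (γ : ℝ)
    (hγ0 : 0 < γ) (hγ2 : γ < 2) (hγN : γ < N) (p : ℝ) (hp : p = 1 + (2 - γ) / N)
    (c₁ c₂ : ℝ) (hc₁ : 0 < c₁) (hc₂ : 0 < c₂) :
    ∃ K : ℝ, 0 < K ∧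
      ∀ M ρ T : ℝ, 0 ≤ M → 0 < ρ → 5 * ρ ^ 2 < T →
      ∀ w : ℝ → ℝ≥0∞, Measurable w →
      (∀ᵐ t ∂(volume.restrict (Set.Ioo (ρ ^ 2) T)), w t ≠ ⊤) →
      (∀ᵐ t ∂(volume.restrict (Set.Ioo (ρ ^ 2) T)),
        ENNReal.ofReal (c₁ * M * t ^ (-(N : ℝ) / 2)) +
            ENNReal.ofReal (c₂ * t ^ (-(N : ℝ) / 2)) *
              ∫⁻ s in Set.Ioo (ρ ^ 2) t, ENNReal.ofReal (s ^ (((N : ℝ) - γ) / 2)) * w s ^ p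
          ≤ w t) →
      M ≤ K * Real.log (T / (5 * ρ ^ 2)) ^ (-1 / (p - 1)) := by
  have hN0 : (0:ℝ) < (N:ℝ) := by exact_mod_cast Nat.lt_of_lt_of_le Nat.zero_lt_one hN
  have hp1 : 1 < p := by
    rw [hp]
    have : 0 < (2 - γ)/(N:ℝ) := div_pos (by linarith) hN0
    linarith
  have hp0 : 0 < p := lt_trans one_pos hp1
  have hpm : 0 < p - 1 := sub_pos.mpr hp1
  have hef : ((N:ℝ) - γ)/2 + (-(N:ℝ)/2) * p = -1 := by
    rw [hp]; field_simp; ring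
  set r : ℝ := (2:ℝ) ^ (1 - p) with hr_def
  have hr0 : 0 < r := Real.rpow_pos_of_pos two_pos _
  have hr1 : r < 1 := Real.rpow_lt_one_of_one_lt_of_neg one_lt_two (by linarith)
  set B : ℝ := c₂ ^ p * (1 - r) with hB_def
  have hB : 0 < B := mul_pos (Real.rpow_pos_of_pos hc₂ _) (by linarith)
  refine ⟨c₁⁻¹ * B ^ (-((p-1)*p)⁻¹) * 2 ^ ((p-1)⁻¹), by positivity, ?_⟩
  intro M ρ T hM hρ hT w hwm hfin hineq
  have hρ2 : (0:ℝ) < ρ^2 := by positivity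
  have h5a : ρ^2 < 5*ρ^2 := by nlinarith
  have h5ρ : (0:ℝ) < 5*ρ^2 := by positivity
  have haT : ρ^2 < T := lt_trans h5a hT
  have hT0 : 0 < T := lt_trans h5ρ hT
  have hL : 0 < Real.log (T/(5*ρ^2)) := Real.log_pos ((one_lt_div h5ρ).mpr hT)
  set L := Real.log (T/(5*ρ^2)) with hL_def
  rcases eq_or_lt_of_le hM with hM0 | hM0
  · rw [← hM0]; positivity
  set F : ℝ → ℝ≥0∞ :=
    fun t => ∫⁻ s in Set.Ioo (ρ^2) t, ENNReal.ofReal (s ^ (((N:ℝ) - γ)/2)) * w s ^ p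
    with hF_def
  have hFmono : ∀ {t t' : ℝ}, t ≤ t' → F t ≤ F t' := fun h =>
    lintegral_mono' (Measure.restrict_mono (Set.Ioo_subset_Ioo le_rfl h) le_rfl) le_rfl
  have hineq' : ∀ᵐ t ∂(volume.restrict (Set.Ioo (ρ ^ 2) T)),
      ENNReal.ofReal (c₁ * M * t ^ (-(N : ℝ) / 2)) +
        ENNReal.ofReal (c₂ * t ^ (-(N : ℝ) / 2)) * F t ≤ w t := hineq
  -- Step A: finiteness of F below T
  have hfinF : ∀ t, t < T → F t ≠ ⊤ := by
    intro t htT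
    rcases le_or_gt t (ρ^2) with h | h
    · have he : Set.Ioo (ρ^2) t = ∅ := Set.Ioo_eq_empty (not_lt.mpr h)
      rw [hF_def]; simp [he]
    · by_contra htop
      have hae : ∀ᵐ x ∂(volume.restrict (Set.Ioo (ρ^2) T)), x ∉ Set.Ioo t T := by
        filter_upwards [hineq', hfin] with x hx1 hx2
        intro hx3
        apply hx2
        have hFx : F x = ⊤ := eq_top_iff.mpr (htop ▸ hFmono hx3.1.le)
        have h2 : ENNReal.ofReal (c₂ * x ^ (-(N:ℝ)/2)) * F x ≤ w x :=
          le_trans (self_le_add_left _ _) hx1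
        rw [hFx, ENNReal.mul_top
          (ENNReal.ofReal_pos.mpr (mul_pos hc₂ (Real.rpow_pos_of_pos
            (lt_trans hρ2 (lt_trans h hx3.1)) _))).ne'] at h2
        exact top_le_iff.mp h2
      rw [ae_iff] at hae
      simp only [not_not] at hae
      rw [Measure.restrict_apply' measurableSet_Ioo] at hae
      have hss : {x | x ∈ Set.Ioo t T} ∩ Set.Ioo (ρ^2) T = Set.Ioo t T := by
        rw [Set.setOf_mem_eq]
        exact Set.inter_eq_self_of_subset_left (Set.Ioo_subset_Ioo h.le le_rfl)
      rw [hss, Real.volume_Ioo] at hae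
      rw [ENNReal.ofReal_eq_zero] at hae
      linarith
  -- step inequality
  have hstep : ∀ t t', ρ^2 < t → t ≤ t' → t' < T →
      F t + ENNReal.ofReal (c₂^p * Real.log (t'/t)) * (F t)^p ≤ F t' := by
    intro t t' h1 h2 h3
    have hWlow : ∀ᵐ s ∂(volume.restrict (Set.Ioo t t')),
        ENNReal.ofReal (c₂ * s ^ (-(N:ℝ)/2)) * F t ≤ w s := by
      have hsub : Set.Ioo t t' ⊆ Set.Ioo (ρ^2) T := Set.Ioo_subset_Ioo h1.le h3.le
      filter_upwards [ae_restrict_of_ae_restrict_of_subset hsub hineq',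
        ae_restrict_mem measurableSet_Ioo] with s hs hmem
      calc ENNReal.ofReal (c₂ * s ^ (-(N:ℝ)/2)) * F t
          ≤ ENNReal.ofReal (c₂ * s ^ (-(N:ℝ)/2)) * F s :=
            mul_le_mul_right (hFmono hmem.1.le) _
        _ ≤ w s := le_trans (self_le_add_left _ _) hs
    have hchunk := step_low hp0.le hc₂ hef w (F t)
      (hfinF t (lt_of_le_of_lt h2 h3)) (lt_trans hρ2 h1) h2 hWlow
    have hunion : F t + (∫⁻ s in Set.Ioo t t',
        ENNReal.ofReal (s ^ (((N:ℝ) - γ)/2)) * w s ^ p) ≤ F t' := by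
      have hdis : Disjoint (Set.Ioo (ρ^2) t) (Set.Ioo t t') := by
        rw [Set.disjoint_left]
        rintro x ⟨_, hx2⟩ ⟨hx3, _⟩
        exact absurd hx3 (not_lt.mpr hx2.le)
      have hU : (∫⁻ s in Set.Ioo (ρ^2) t ∪ Set.Ioo t t',
            ENNReal.ofReal (s ^ (((N:ℝ) - γ)/2)) * w s ^ p)
          = F t + ∫⁻ s in Set.Ioo t t',
            ENNReal.ofReal (s ^ (((N:ℝ) - γ)/2)) * w s ^ p :=
        lintegral_union measurableSet_Ioo hdis
      rw [← hU]
      refine lintegral_mono' (Measure.restrict_mono ?_ le_rfl) le_rfl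
      exact Set.union_subset (Set.Ioo_subset_Ioo le_rfl h2) (Set.Ioo_subset_Ioo h1.le le_rfl)
    exact le_trans (add_le_add le_rfl hchunk) hunion
  -- geometric-mean point
  set t₀ := Real.sqrt ((5*ρ^2) * T) with ht₀_def
  have ht₀gt : 5*ρ^2 < t₀ := by
    calc 5*ρ^2 = Real.sqrt ((5*ρ^2)*(5*ρ^2)) := (Real.sqrt_mul_self h5ρ.le).symm
      _ < t₀ := Real.sqrt_lt_sqrt (by positivity) (by nlinarith)
  have ht₀T : t₀ < T := by
    calc t₀ < Real.sqrt (T*T) := Real.sqrt_lt_sqrt (by positivity) (by nlinarith)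
      _ = T := Real.sqrt_mul_self hT0.le
  have ht₀a : ρ^2 < t₀ := lt_trans h5a ht₀gt
  have ht₀pos : 0 < t₀ := lt_trans hρ2 ht₀a
  have hlogT : Real.log (T / t₀) = L/2 := by
    rw [Real.log_div hT0.ne' ht₀pos.ne', ht₀_def, Real.log_sqrt (by positivity),
      Real.log_mul h5ρ.ne' hT0.ne', hL_def, Real.log_div hT0.ne' h5ρ.ne']
    ring
  have hlog0 : L/2 ≤ Real.log (t₀ / ρ^2) := by
    rw [Real.log_div ht₀pos.ne' hρ2.ne', ht₀_def, Real.log_sqrt (by positivity),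
      Real.log_mul h5ρ.ne' hT0.ne', hL_def, Real.log_div hT0.ne' h5ρ.ne']
    have : Real.log (ρ^2) < Real.log (5*ρ^2) := Real.log_lt_log hρ2 h5a
    linarith
  -- base bound
  have hbase : ENNReal.ofReal ((c₁*M)^p * (L/2)) ≤ F t₀ := by
    have hw0 : ∀ᵐ s ∂(volume.restrict (Set.Ioo (ρ^2) t₀)),
        ENNReal.ofReal ((c₁*M) * s ^ (-(N:ℝ)/2)) * 1 ≤ w s := by
      filter_upwards [ae_restrict_of_ae_restrict_of_subset
        (Set.Ioo_subset_Ioo le_rfl ht₀T.le) hineq'] with s hs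
      rw [mul_one]
      exact le_trans (le_self_add) hs
    have h1 := step_low hp0.le (mul_pos hc₁ hM0) hef w 1 ENNReal.one_ne_top hρ2 ht₀a.le hw0
    rw [ENNReal.one_rpow, mul_one] at h1
    refine le_trans ?_ h1
    exact ENNReal.ofReal_le_ofReal (mul_le_mul_of_nonneg_left hlog0 (by positivity))
  have hFt₀ : F t₀ ≠ ⊤ := hfinF t₀ ht₀T
  set α := (F t₀).toReal with hα_def
  have hα0 : 0 ≤ α := ENNReal.toReal_nonneg
  have hFt₀eq : F t₀ = ENNReal.ofReal α := (ENNReal.ofReal_toReal hFt₀).symm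
  set A := (B * (L/2)) ^ (-(p-1)⁻¹) with hA_def
  have hA0 : 0 < A := Real.rpow_pos_of_pos (by positivity) _
  -- key claim: α ≤ A
  have hkey : α ≤ A := by
    by_contra hcon
    push_neg at hcon
    have hαpos : 0 < α := lt_trans hA0 hcon
    set δ : ℕ → ℝ := fun k => (2^k * α)^(1-p) / c₂^p with hδ_def
    have hδpos : ∀ k, 0 < δ k := fun k =>
      div_pos (Real.rpow_pos_of_pos (by positivity) _) (Real.rpow_pos_of_pos hc₂ _)
    have hδeq : ∀ k, δ k = α^(1-p)/c₂^p * r^k := by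
      intro k
      rw [hδ_def, hr_def]
      simp only
      rw [Real.mul_rpow (by positivity) hα0, ← Real.rpow_natCast (2:ℝ) k,
        ← Real.rpow_mul (by norm_num : (0:ℝ) ≤ 2),
        ← Real.rpow_natCast ((2:ℝ) ^ (1-p)) k,
        ← Real.rpow_mul (by norm_num : (0:ℝ) ≤ 2), mul_comm (k:ℝ) (1-p)]
      ring
    set S := α^(1-p)/c₂^p * (1-r)⁻¹ with hS_def
    have hsum : ∀ k, ∑ j ∈ Finset.range k, δ j ≤ S := by
      intro k
      have h1 : ∑ j ∈ Finset.range k, δ j = α^(1-p)/c₂^p * ∑ j ∈ Finset.range k, r^j := by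
        rw [Finset.mul_sum]
        exact Finset.sum_congr rfl fun j _ => hδeq j
      rw [h1, hS_def]
      refine mul_le_mul_of_nonneg_left ?_ (by positivity)
      have h2 := (summable_geometric_of_lt_one hr0.le hr1).sum_le_tsum (Finset.range k)
        (fun i _ => by positivity)
      rwa [tsum_geometric_of_lt_one hr0.le hr1] at h2
    have hSL : S < L/2 := by
      have hA1p : A^(1-p) = B*(L/2) := by
        rw [hA_def, ← Real.rpow_mul (by positivity)]
        rw [show -(p-1)⁻¹*(1-p) = 1 by field_simp; ring, Real.rpow_one]
      have hlt : α^(1-p) < A^(1-p) := by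
        have := Real.rpow_lt_rpow_of_neg hA0 hcon (by linarith : 1 - p < 0)
        exact this
      rw [hA1p] at hlt
      have hSeq : S = α^(1-p)/B := by
        rw [hS_def, hB_def]
        field_simp
      rw [hSeq, div_lt_iff₀ hB]
      linarith
    set tk : ℕ → ℝ := fun k => t₀ * Real.exp (∑ j ∈ Finset.range k, δ j) with htk_def
    have htk_pos : ∀ k, 0 < tk k := fun k => mul_pos ht₀pos (Real.exp_pos _)
    have h_t₀S : t₀ * Real.exp S < T := by
      calc t₀ * Real.exp S < t₀ * Real.exp (L/2) :=
            mul_lt_mul_of_pos_left (Real.exp_lt_exp.mpr hSL) ht₀pos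
        _ = T := by
            rw [← hlogT, Real.exp_log (div_pos hT0 ht₀pos)]
            field_simp
    have htk_leS : ∀ k, tk k ≤ t₀ * Real.exp S := by
      intro k
      exact mul_le_mul_of_nonneg_left (Real.exp_le_exp.mpr (hsum k)) ht₀pos.le
    have htk_lt : ∀ k, tk k < T := fun k => lt_of_le_of_lt (htk_leS k) h_t₀S
    have htk_gt : ∀ k, ρ^2 < tk k := by
      intro k
      have h1 : t₀ ≤ tk k := by
        rw [htk_def]
        simp only
        exact le_mul_of_one_le_right ht₀pos.le
          (Real.one_le_exp (Finset.sum_nonneg fun j _ => (hδpos j).le))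
      linarith
    have htk_mono : ∀ k, tk k ≤ tk (k+1) := by
      intro k
      rw [htk_def]
      simp only
      refine mul_le_mul_of_nonneg_left (Real.exp_le_exp.mpr ?_) ht₀pos.le
      exact Finset.sum_le_sum_of_subset_of_nonneg
        (Finset.range_subset_range.mpr (Nat.le_succ k)) (fun i _ _ => (hδpos i).le)
    have hlog_tk : ∀ k, Real.log (tk (k+1) / tk k) = δ k := by
      intro k
      rw [htk_def]
      simp only
      rw [mul_div_mul_left _ _ ht₀pos.ne', ← Real.exp_sub, Real.log_exp,
        Finset.sum_range_succ]
      ring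
    have hind : ∀ k, ENNReal.ofReal (2^k * α) ≤ F (tk k) := by
      intro k
      induction k with
      | zero =>
        have h0 : tk 0 = t₀ := by
          rw [htk_def]; simp
        rw [h0, hFt₀eq]
        simp
      | succ k ih =>
        have h1 := hstep (tk k) (tk (k+1)) (htk_gt k) (htk_mono k) (htk_lt (k+1))
        refine le_trans ?_ h1
        have h2 : ENNReal.ofReal (2^k*α)
              + ENNReal.ofReal (c₂^p * Real.log (tk (k+1)/tk k)) * (ENNReal.ofReal (2^k*α))^p
            ≤ F (tk k) + ENNReal.ofReal (c₂^p * Real.log (tk (k+1)/tk k)) * (F (tk k))^p :=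
          add_le_add ih (mul_le_mul_right (ENNReal.rpow_le_rpow ih hp0.le) _)
        refine le_trans (le_of_eq ?_) h2
        rw [hlog_tk k, hδ_def]
        simp only
        have hx : (0:ℝ) < 2^k * α := by positivity
        rw [ENNReal.ofReal_rpow_of_pos hx, ← ENNReal.ofReal_mul (by positivity),
          ← ENNReal.ofReal_add (by positivity) (by positivity)]
        congr 1
        have h3 : c₂ ^ p * ((2^k*α)^(1-p)/c₂^p) = (2^k*α)^(1-p) := by
          have : c₂ ^ p ≠ 0 := (Real.rpow_pos_of_pos hc₂ p).ne'
          field_simp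
        rw [h3, ← Real.rpow_add hx, show (1:ℝ)-p+p = 1 by ring, Real.rpow_one]
        ring
    have hFtInf : F (t₀ * Real.exp S) ≠ ⊤ := hfinF _ h_t₀S
    have hbound : ∀ k : ℕ, 2^k * α ≤ (F (t₀ * Real.exp S)).toReal := by
      intro k
      have h1 : ENNReal.ofReal (2^k*α) ≤ F (t₀ * Real.exp S) :=
        le_trans (hind k) (hFmono (htk_leS k))
      exact (ENNReal.ofReal_le_iff_le_toReal hFtInf).mp h1
    obtain ⟨k, hk⟩ := pow_unbounded_of_one_lt ((F (t₀ * Real.exp S)).toReal / α)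
      (one_lt_two (α := ℝ))
    have h2 := hbound k
    rw [div_lt_iff₀ hαpos] at hk
    linarith
  -- conclude
  have hchain : (c₁*M)^p * (L/2) ≤ A := by
    have h1 : ENNReal.ofReal ((c₁*M)^p * (L/2)) ≤ ENNReal.ofReal α := hFt₀eq ▸ hbase
    have h2 := (ENNReal.ofReal_le_ofReal_iff hα0).mp h1
    linarith
  have hL2 : 0 < L/2 := by positivity
  have hfin2 : (c₁*M)^p ≤ A * (L/2)⁻¹ := by
    rw [← div_eq_mul_inv, le_div_iff₀ hL2]
    exact hchain
  have h3 : c₁*M ≤ (A * (L/2)⁻¹)^p⁻¹ := by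
    have h4 := Real.rpow_le_rpow (by positivity) hfin2 (by positivity : (0:ℝ) ≤ p⁻¹)
    rwa [← Real.rpow_mul (by positivity : (0:ℝ) ≤ c₁*M), mul_inv_cancel₀ hp0.ne',
      Real.rpow_one] at h4
  have hKeq : (A * (L/2)⁻¹)^p⁻¹ = B ^ (-((p-1)*p)⁻¹) * 2 ^ ((p-1)⁻¹) * L^(-1/(p-1)) := by
    rw [hA_def]
    exact alg_final hB hL hp1
  rw [hKeq] at h3
  calc M = c₁⁻¹ * (c₁ * M) := by field_simp
    _ ≤ c₁⁻¹ * (B ^ (-((p-1)*p)⁻¹) * 2 ^ ((p-1)⁻¹) * L^(-1/(p-1))) :=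
        mul_le_mul_of_nonneg_left h3 (by positivity)
    _ = (c₁⁻¹ * B ^ (-((p-1)*p)⁻¹) * 2 ^ ((p-1)⁻¹)) * L^(-1/(p-1)) := by ring
end
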